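/- arXiv:1411.6667 — 6 statements merged into one kernel-verified Lean document; each statement's English description precedes it below -/
import Mathlib

section
/- There exist absolute constants c > 0 and ε₀ > 0 such that for every ε with 0 < ε < ε₀ and for infinitely many block lengths N, there is a binary code C ⊆ {0,1}^N with |C| ≥ 2^{(1 − c·√ε·log₂(1/ε))·N} that can be corrected from an ε fraction of worst-case deletions, i.e., every binary string of length ⌈(1−ε)N⌉ is a subsequence of at most one codeword of C. (Combinatorial content of the paper's Theorem 4.1: binary codes of rate 1 − Õ(√ε) correcting an ε fraction of deletions.) -/
/-- `s` (of length `ℓ`) is a subsequence of `t` (of length `m`): there are indices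
`i₁ < ⋯ < i_ℓ` with `t (i_j) = s j` for all `j`. -/
def IsSubseq {α : Type*} {ℓ m : ℕ} (s : Fin ℓ → α) (t : Fin m → α) : Prop :=
  ∃ f : Fin ℓ → Fin m, StrictMono f ∧ ∀ j, t (f j) = s j

open Finset in
open scoped Classical in
/-- The set of strings confusable with `u` via a common subsequence of length `ℓ`. -/
noncomputable def delBall (N ℓ : ℕ) (u : Fin N → Fin 2) : Finset (Fin N → Fin 2) :=
  Finset.univ.filter fun v => ∃ s : Fin ℓ → Fin 2, IsSubseq s u ∧ IsSubseq s v

open Finset in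
lemma delBall_card {N ℓ : ℕ} (u : Fin N → Fin 2) :
    (delBall N ℓ u).card ≤ N.choose ℓ * (N.choose ℓ * 2 ^ (N - ℓ)) := by
  classical
  -- decoding map
  set Φ : Finset (Fin N) → Finset (Fin N) → (Fin N → Fin 2) → (Fin N → Fin 2) :=
    fun A B w i =>
      if h : A.card = ℓ ∧ B.card = ℓ ∧ i ∈ B then
        u (A.orderEmbOfFin h.1 ((B.orderIsoOfFin h.2.1).symm ⟨i, h.2.2⟩))
      else w i with hΦ
  have hsub : delBall N ℓ u ⊆
      (powersetCard ℓ (univ : Finset (Fin N))).biUnion (fun B =>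
        ((powersetCard ℓ (univ : Finset (Fin N))) ×ˢ
          ((univ : Finset (Fin N → Fin 2)).filter fun w => ∀ i ∈ B, w i = 0)).image
          (fun p => Φ p.1 B p.2)) := by
    intro v hv
    simp only [delBall, mem_filter, mem_univ, true_and] at hv
    obtain ⟨s, ⟨f, hf, hfu⟩, ⟨g, hg, hgv⟩⟩ := hv
    set A : Finset (Fin N) := Finset.image f univ with hAdef
    set B : Finset (Fin N) := Finset.image g univ with hBdef
    have hA : A.card = ℓ := by
      rw [hAdef, card_image_of_injective _ hf.injective, card_univ, Fintype.card_fin]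
    have hB : B.card = ℓ := by
      rw [hBdef, card_image_of_injective _ hg.injective, card_univ, Fintype.card_fin]
    have hfA : f = A.orderEmbOfFin hA :=
      orderEmbOfFin_unique hA (fun x => mem_image_of_mem f (mem_univ x)) hf
    have hgB : g = B.orderEmbOfFin hB :=
      orderEmbOfFin_unique hB (fun x => mem_image_of_mem g (mem_univ x)) hg
    set w : Fin N → Fin 2 := fun i => if i ∈ B then 0 else v i with hwdef
    refine mem_biUnion.2 ⟨B, ?_, ?_⟩
    · exact mem_powersetCard.2 ⟨subset_univ _, hB⟩
    refine mem_image.2 ⟨(A, w), ?_, ?_⟩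
    · refine mem_product.2 ⟨mem_powersetCard.2 ⟨subset_univ _, hA⟩, ?_⟩
      simp only [mem_filter, mem_univ, true_and]
      intro i hi
      simp [hwdef, hi]
    · funext i
      by_cases hiB : i ∈ B
      · obtain ⟨j, _, rfl⟩ := mem_image.1 hiB
        have hiso : B.orderIsoOfFin hB j = ⟨g j, hiB⟩ := by
          apply Subtype.ext
          rw [coe_orderIsoOfFin_apply]
          exact (congrFun hgB j).symm
        have hsymm : (B.orderIsoOfFin hB).symm ⟨g j, hiB⟩ = j := by
          rw [← hiso, OrderIso.symm_apply_apply]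
        simp only [hΦ, dif_pos (⟨hA, hB, hiB⟩ : A.card = ℓ ∧ B.card = ℓ ∧ g j ∈ B)]
        rw [hsymm, ← congrFun hfA j, hfu j, hgv j]
      · have hcond : ¬ (A.card = ℓ ∧ B.card = ℓ ∧ i ∈ B) := by
          rintro ⟨-, -, h⟩; exact hiB h
        simp only [hΦ, dif_neg hcond, hwdef, if_neg hiB]
  calc (delBall N ℓ u).card ≤ _ := card_le_card hsub
    _ ≤ ∑ B ∈ powersetCard ℓ (univ : Finset (Fin N)), _ := card_biUnion_le
    _ ≤ N.choose ℓ * (N.choose ℓ * 2 ^ (N - ℓ)) := by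
        have hW : ∀ B ∈ powersetCard ℓ (univ : Finset (Fin N)),
            (((univ : Finset (Fin N → Fin 2)).filter fun w => ∀ i ∈ B, w i = 0)).card
              ≤ 2 ^ (N - ℓ) := by
          intro B hB
          have hBcard : B.card = ℓ := (mem_powersetCard.1 hB).2
          have : (((univ : Finset (Fin N → Fin 2)).filter fun w => ∀ i ∈ B, w i = 0)).card
              ≤ (univ : Finset ((↥(Bᶜ : Finset (Fin N))) → Fin 2)).card := by
            apply card_le_card_of_injOn (fun w => fun i => w i.1)
            · intro w _; exact mem_univ _
            · intro w1 h1 w2 h2 heq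
              simp only [coe_filter, Set.mem_setOf_eq] at h1 h2
              funext i
              by_cases hi : i ∈ B
              · rw [h1.2 i hi, h2.2 i hi]
              · exact congrFun heq ⟨i, mem_compl.2 hi⟩
          refine this.trans ?_
          rw [card_univ, Fintype.card_fun, Fintype.card_fin, Fintype.card_coe,
            card_compl, Fintype.card_fin, hBcard]
        calc ∑ B ∈ powersetCard ℓ (univ : Finset (Fin N)),
              (((powersetCard ℓ (univ : Finset (Fin N))) ×ˢ
                ((univ : Finset (Fin N → Fin 2)).filter fun w => ∀ i ∈ B, w i = 0)).image
                (fun p => Φ p.1 B p.2)).card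
            ≤ ∑ B ∈ powersetCard ℓ (univ : Finset (Fin N)), N.choose ℓ * 2 ^ (N - ℓ) := by
              apply sum_le_sum
              intro B hB
              calc _ ≤ ((powersetCard ℓ (univ : Finset (Fin N))) ×ˢ
                    ((univ : Finset (Fin N → Fin 2)).filter fun w => ∀ i ∈ B, w i = 0)).card :=
                    card_image_le
                _ = (powersetCard ℓ (univ : Finset (Fin N))).card *
                    (((univ : Finset (Fin N → Fin 2)).filter fun w => ∀ i ∈ B, w i = 0)).card :=
                    card_product _ _
                _ ≤ N.choose ℓ * 2 ^ (N - ℓ) := by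
                    apply Nat.mul_le_mul
                    · rw [card_powersetCard, card_univ, Fintype.card_fin]
                    · exact hW B hB
          _ = N.choose ℓ * (N.choose ℓ * 2 ^ (N - ℓ)) := by
              rw [sum_const, card_powersetCard, card_univ, Fintype.card_fin, smul_eq_mul]

open Finset in
lemma mem_delBall {N ℓ : ℕ} {u v : Fin N → Fin 2} :
    v ∈ delBall N ℓ u ↔ ∃ s : Fin ℓ → Fin 2, IsSubseq s u ∧ IsSubseq s v := by
  classical
  rw [delBall]
  simp only [Finset.mem_filter, Finset.mem_univ, true_and]

open Finset in
lemma exists_good_code (N ℓ : ℕ) (hℓ : ℓ ≤ N) :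
    ∃ C : Finset (Fin N → Fin 2),
      2 ^ N ≤ C.card * (N.choose ℓ * (N.choose ℓ * 2 ^ (N - ℓ))) ∧
      ∀ s : Fin ℓ → Fin 2, ∀ u ∈ C, ∀ v ∈ C, IsSubseq s u → IsSubseq s v → u = v := by
  classical
  have hempty : (∅ : Finset (Fin N → Fin 2)) ∈
      (univ : Finset (Finset (Fin N → Fin 2))).filter
        (fun C => ∀ s : Fin ℓ → Fin 2, ∀ u ∈ C, ∀ v ∈ C,
          IsSubseq s u → IsSubseq s v → u = v) := by
    refine mem_filter.2 ⟨mem_univ _, ?_⟩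
    intro s u hu
    exact absurd hu (notMem_empty u)
  obtain ⟨C, hCmem, hCmax⟩ := Finset.exists_max_image
    ((univ : Finset (Finset (Fin N → Fin 2))).filter
      (fun C => ∀ s : Fin ℓ → Fin 2, ∀ u ∈ C, ∀ v ∈ C,
        IsSubseq s u → IsSubseq s v → u = v)) Finset.card ⟨∅, hempty⟩
  have hCgood : ∀ s : Fin ℓ → Fin 2, ∀ u ∈ C, ∀ v ∈ C,
      IsSubseq s u → IsSubseq s v → u = v := (mem_filter.1 hCmem).2
  refine ⟨C, ?_, hCgood⟩
  -- covering
  have hcov : (univ : Finset (Fin N → Fin 2)) ⊆ C.biUnion (delBall N ℓ) := by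
    intro x _
    have hself : ∀ y : Fin N → Fin 2, y ∈ delBall N ℓ y := by
      intro y
      rw [mem_delBall]
      exact ⟨fun j => y (Fin.castLE hℓ j), ⟨Fin.castLE hℓ, Fin.strictMono_castLE hℓ,
        fun j => rfl⟩, ⟨Fin.castLE hℓ, Fin.strictMono_castLE hℓ, fun j => rfl⟩⟩
    by_cases hx : x ∈ C
    · exact mem_biUnion.2 ⟨x, hx, hself x⟩
    · have hnotgood : ¬ (∀ s : Fin ℓ → Fin 2, ∀ u ∈ insert x C, ∀ v ∈ insert x C,
          IsSubseq s u → IsSubseq s v → u = v) := by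
        intro hg
        have := hCmax (insert x C) (mem_filter.2 ⟨mem_univ _, hg⟩)
        rw [card_insert_of_notMem hx] at this
        omega
      push_neg at hnotgood
      obtain ⟨s, a, ha, b, hb, hsa, hsb, hab⟩ := hnotgood
      rcases mem_insert.1 ha with rfl | haC
      · rcases mem_insert.1 hb with rfl | hbC
        · exact absurd rfl hab
        · exact mem_biUnion.2 ⟨b, hbC, mem_delBall.2 ⟨s, hsb, hsa⟩⟩
      · rcases mem_insert.1 hb with rfl | hbC
        · exact mem_biUnion.2 ⟨a, haC, mem_delBall.2 ⟨s, hsa, hsb⟩⟩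
        · exact absurd (hCgood s a haC b hbC hsa hsb) hab
  calc 2 ^ N = (univ : Finset (Fin N → Fin 2)).card := by
        rw [card_univ, Fintype.card_fun, Fintype.card_fin, Fintype.card_fin]
    _ ≤ (C.biUnion (delBall N ℓ)).card := card_le_card hcov
    _ ≤ ∑ u ∈ C, (delBall N ℓ u).card := card_biUnion_le
    _ ≤ ∑ u ∈ C, (N.choose ℓ * (N.choose ℓ * 2 ^ (N - ℓ))) :=
        sum_le_sum fun u _ => delBall_card u
    _ = C.card * (N.choose ℓ * (N.choose ℓ * 2 ^ (N - ℓ))) := by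
        rw [sum_const, smul_eq_mul]

lemma factorial_lower (k : ℕ) : ((k : ℝ) / 4) ^ k ≤ (Nat.factorial k : ℝ) := by
  have h := Real.pow_div_factorial_le_exp (x := (k : ℝ)) (Nat.cast_nonneg k) k
  have hexp : Real.exp (k : ℝ) = Real.exp 1 ^ k := by
    rw [← Real.exp_nat_mul, mul_one]
  have hfac : (0 : ℝ) < (Nat.factorial k : ℝ) := by positivity
  have hkk : (k : ℝ) ^ k ≤ (Nat.factorial k : ℝ) * Real.exp 1 ^ k := by
    rw [div_le_iff₀ hfac] at h
    rw [hexp] at h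
    linarith [h]
  have h4 : Real.exp 1 ≤ 4 := by
    have := Real.exp_one_lt_d9
    norm_num at this ⊢
    linarith
  calc ((k : ℝ) / 4) ^ k = (k : ℝ) ^ k / 4 ^ k := div_pow _ _ _
    _ ≤ ((Nat.factorial k : ℝ) * Real.exp 1 ^ k) / 4 ^ k := by
        apply div_le_div_of_nonneg_right hkk; positivity
    _ = (Nat.factorial k : ℝ) * (Real.exp 1 / 4) ^ k := by rw [div_pow]; ring
    _ ≤ (Nat.factorial k : ℝ) * 1 := by
        apply mul_le_mul_of_nonneg_left _ hfac.le
        apply pow_le_one₀ (by positivity)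
        linarith
    _ = (Nat.factorial k : ℝ) := mul_one _

lemma choose_upper {N k : ℕ} (hk : 1 ≤ k) : (N.choose k : ℝ) ≤ (4 * N / k) ^ k := by
  have hkpos : (0 : ℝ) < k := by exact_mod_cast hk
  have h1 : (N.choose k : ℝ) ≤ (N : ℝ) ^ k / (Nat.factorial k : ℝ) := by
    have := Nat.choose_le_pow_div (α := ℝ) k N
    push_cast at this ⊢
    exact this
  have h2 : ((k : ℝ) / 4) ^ k ≤ (Nat.factorial k : ℝ) := factorial_lower k
  have hpos : (0 : ℝ) < ((k : ℝ) / 4) ^ k := by positivity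
  calc (N.choose k : ℝ) ≤ (N : ℝ) ^ k / (Nat.factorial k : ℝ) := h1
    _ ≤ (N : ℝ) ^ k / ((k : ℝ) / 4) ^ k := by
        apply div_le_div_of_nonneg_left (by positivity) hpos h2
    _ = (4 * N / k) ^ k := by
        rw [← div_pow]
        congr 1
        field_simp

lemma log_le_two_sqrt {x : ℝ} (hx : 0 < x) : Real.log x ≤ 2 * Real.sqrt x := by
  have h1 : Real.log (Real.sqrt x) = Real.log x / 2 := Real.log_sqrt hx.le
  have h2 : Real.log (Real.sqrt x) ≤ Real.sqrt x - 1 :=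
    Real.log_le_sub_one_of_pos (Real.sqrt_pos.2 hx)
  nlinarith [Real.sqrt_nonneg x]

lemma key_bound {N ℓ : ℕ} (ε : ℝ) (hε : 0 < ε) (hε2 : ε ≤ 1 / 2) (hℓN : ℓ ≤ N)
    (hk : ((N - ℓ : ℕ) : ℝ) ≤ ε * N) :
    (N.choose ℓ : ℝ) * ((N.choose ℓ : ℝ) * 2 ^ (N - ℓ)) ≤
      (2 : ℝ) ^ (11 * Real.sqrt ε * Real.logb 2 (1 / ε) * N) := by
  obtain ⟨k, hkdef⟩ : ∃ k, k = N - ℓ := ⟨N - ℓ, rfl⟩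
  rw [← hkdef] at hk ⊢
  have hLone : 1 ≤ Real.logb 2 (1 / ε) := by
    have h2 : (2 : ℝ) ≤ 1 / ε := by
      rw [le_div_iff₀ hε]; linarith
    calc (1 : ℝ) = Real.logb 2 2 := (Real.logb_self_eq_one one_lt_two).symm
      _ ≤ Real.logb 2 (1 / ε) := Real.logb_le_logb_of_le one_lt_two two_pos h2
  have hE0 : 0 ≤ 11 * Real.sqrt ε * Real.logb 2 (1 / ε) * N := by
    have := Real.sqrt_nonneg ε
    positivity
  have hchoose_symm : N.choose ℓ = N.choose k := by
    rw [hkdef, Nat.choose_symm hℓN]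
  rcases Nat.eq_zero_or_pos k with hk0 | hk1
  · rw [hchoose_symm, hk0]
    simp only [Nat.choose_zero_right, Nat.cast_one, pow_zero, one_mul, mul_one]
    calc (1 : ℝ) = (2 : ℝ) ^ (0 : ℝ) := by rw [Real.rpow_zero]
      _ ≤ _ := (Real.rpow_le_rpow_left_iff one_lt_two).2 hE0
  · -- main case
    have hkR : (0 : ℝ) < k := by exact_mod_cast hk1
    have hNk : k ≤ N := hkdef ▸ Nat.sub_le N ℓ
    have hN1 : 1 ≤ N := le_trans hk1 hNk
    have hNR : (0 : ℝ) < N := by exact_mod_cast hN1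
    obtain ⟨a, hadef⟩ : ∃ a : ℝ, a = 4 * N / k := ⟨_, rfl⟩
    have ha1 : (1 : ℝ) < a := by
      rw [hadef, lt_div_iff₀ hkR]
      have : (k : ℝ) ≤ N := by exact_mod_cast hNk
      linarith
    have ha0 : (0 : ℝ) < a := lt_trans one_pos ha1
    have hchoose : (N.choose ℓ : ℝ) ≤ a ^ k := by
      rw [hchoose_symm, hadef]; exact choose_upper hk1
    have hchoose0 : (0 : ℝ) ≤ (N.choose ℓ : ℝ) := Nat.cast_nonneg _
    have hstep1 : (N.choose ℓ : ℝ) * ((N.choose ℓ : ℝ) * 2 ^ k) ≤ a ^ k * (a ^ k * 2 ^ k) := by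
      apply mul_le_mul hchoose _ (by positivity) (by positivity)
      apply mul_le_mul_of_nonneg_right hchoose (by positivity)
    refine hstep1.trans ?_
    -- rewrite as rpow
    have ha_eq : a = (2 : ℝ) ^ Real.logb 2 a := (Real.rpow_logb two_pos (by norm_num) ha0).symm
    have hL2 : (0 : ℝ) < Real.log 2 := Real.log_pos one_lt_two
    have hak : (2 : ℝ) ^ (Real.logb 2 a * (k : ℝ)) = a ^ k := by
      rw [Real.rpow_mul two_pos.le, Real.rpow_logb two_pos (by norm_num) ha0,
        Real.rpow_natCast]
    have h2k : (2 : ℝ) ^ ((k : ℕ) : ℝ) = (2 : ℝ) ^ (k : ℕ) := Real.rpow_natCast 2 k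
    have hrw : a ^ k * (a ^ k * 2 ^ k) =
        (2 : ℝ) ^ (Real.logb 2 a * (k : ℝ) + (Real.logb 2 a * (k : ℝ) + (k : ℝ))) := by
      rw [Real.rpow_add two_pos, Real.rpow_add two_pos, hak, h2k]
    rw [hrw]
    apply (Real.rpow_le_rpow_left_iff one_lt_two).2
    -- exponent inequality
    have hloga : Real.log a ≤ 2 * Real.log 2 + 2 * Real.sqrt ((N : ℝ) / k) := by
      have hNk0 : (0 : ℝ) < (N : ℝ) / k := by positivity
      have : a = 4 * ((N : ℝ) / k) := by rw [hadef]; ring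
      rw [this, Real.log_mul (by norm_num) hNk0.ne']
      have h4 : Real.log 4 = 2 * Real.log 2 := by
        rw [show (4 : ℝ) = 2 ^ 2 by norm_num, Real.log_pow]
        push_cast; ring
      have := log_le_two_sqrt hNk0
      linarith
    have hlogb_a : Real.logb 2 a ≤ 2 + 2 * Real.sqrt ((N : ℝ) / k) / Real.log 2 := by
      rw [Real.logb, div_le_iff₀ hL2]
      have h0 : 0 ≤ Real.sqrt ((N : ℝ) / k) := Real.sqrt_nonneg _
      calc Real.log a ≤ 2 * Real.log 2 + 2 * Real.sqrt ((N : ℝ) / k) := hloga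
        _ = (2 + 2 * Real.sqrt ((N : ℝ) / k) / Real.log 2) * Real.log 2 := by
            field_simp
    have hsqrt_eq : (k : ℝ) * Real.sqrt ((N : ℝ) / k) = Real.sqrt ((k : ℝ) * N) := by
      rw [show (k : ℝ) * N = (k : ℝ) ^ 2 * ((N : ℝ) / k) by field_simp,
        Real.sqrt_mul (by positivity), Real.sqrt_sq hkR.le]
    have hsqrtkN : Real.sqrt ((k : ℝ) * N) ≤ Real.sqrt ε * N := by
      have h1 : (k : ℝ) * N ≤ ε * N * N := by
        apply mul_le_mul_of_nonneg_right _ hNR.le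
        exact hkdef ▸ hk
      calc Real.sqrt ((k : ℝ) * N) ≤ Real.sqrt (ε * (N * N)) := by
            apply Real.sqrt_le_sqrt; linarith
        _ = Real.sqrt ε * N := by
            rw [Real.sqrt_mul hε.le, show (N : ℝ) * N = (N:ℝ)^2 by ring, Real.sqrt_sq hNR.le]
    have hinv : 2 / Real.log 2 ≤ 3 := by
      rw [div_le_iff₀ hL2]
      have := Real.log_two_gt_d9
      linarith
    have hkεN : (k : ℝ) ≤ Real.sqrt ε * N := by
      have hsε : ε ≤ Real.sqrt ε := by
        have hs1 : Real.sqrt ε ≤ 1 := by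
          rw [show (1 : ℝ) = Real.sqrt 1 by rw [Real.sqrt_one]]
          exact Real.sqrt_le_sqrt (by linarith)
        nlinarith [Real.sq_sqrt hε.le, Real.sqrt_nonneg ε]
      calc (k : ℝ) ≤ ε * N := hkdef ▸ hk
        _ ≤ Real.sqrt ε * N := by nlinarith
    -- combine
    have hmain : Real.logb 2 a * k ≤ 2 * k + 3 * Real.sqrt ((k : ℝ) * N) := by
      have h0 : 0 ≤ Real.sqrt ((N : ℝ) / k) := Real.sqrt_nonneg _
      have step : Real.logb 2 a * k ≤ (2 + 2 * Real.sqrt ((N : ℝ) / k) / Real.log 2) * k :=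
        mul_le_mul_of_nonneg_right hlogb_a hkR.le
      have h2 : 2 * Real.sqrt ((N : ℝ) / k) / Real.log 2 * k
          = (2 / Real.log 2) * Real.sqrt ((k : ℝ) * N) := by
        rw [← hsqrt_eq]; field_simp
      have h3 : (2 / Real.log 2) * Real.sqrt ((k:ℝ) * N) ≤ 3 * Real.sqrt ((k:ℝ) * N) := by
        apply mul_le_mul_of_nonneg_right hinv (Real.sqrt_nonneg _)
      calc Real.logb 2 a * k ≤ (2 + 2 * Real.sqrt ((N : ℝ) / k) / Real.log 2) * k := step
        _ = 2 * k + 2 * Real.sqrt ((N : ℝ) / k) / Real.log 2 * k := by ring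
        _ ≤ 2 * k + 3 * Real.sqrt ((k : ℝ) * N) := by rw [h2]; linarith
    have hfin : Real.logb 2 a * k + (Real.logb 2 a * k + k) ≤ 11 * Real.sqrt ε * N := by
      linarith [hmain, hsqrtkN, hkεN]
    have hlast : 11 * Real.sqrt ε * N ≤ 11 * Real.sqrt ε * Real.logb 2 (1 / ε) * N := by
      have hnn : (0 : ℝ) ≤ 11 * Real.sqrt ε * N :=
        mul_nonneg (mul_nonneg (by norm_num) (Real.sqrt_nonneg ε)) hNR.le
      have := mul_le_mul_of_nonneg_left hLone hnn
      linarith [this]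
    linarith

/-- There exist absolute constants `c > 0` and `ε₀ > 0` such that for every
`ε ∈ (0, ε₀)` and infinitely many block lengths `N`, there is a binary code
`C ⊆ {0,1}^N` with `|C| ≥ 2^{(1 - c √ε log₂(1/ε)) N}` that can be corrected from an `ε`
fraction of worst-case deletions: every binary string of length `⌈(1-ε)N⌉` is a
subsequence of at most one codeword of `C`. -/
theorem high_rate_binary_deletion_codes :
    ∃ c : ℝ, 0 < c ∧ ∃ ε₀ : ℝ, 0 < ε₀ ∧
      ∀ ε : ℝ, 0 < ε → ε < ε₀ →
        {N : ℕ | ∃ C : Finset (Fin N → Fin 2),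
          (2 : ℝ) ^ ((1 - c * Real.sqrt ε * Real.logb 2 (1 / ε)) * N) ≤ C.card ∧
          ∀ s : Fin (⌈(1 - ε) * N⌉₊) → Fin 2, ∀ u ∈ C, ∀ v ∈ C,
            IsSubseq s u → IsSubseq s v → u = v}.Infinite := by
  refine ⟨11, by norm_num, 1/2, by norm_num, fun ε hε hε2 => ?_⟩
  have huniv : {N : ℕ | ∃ C : Finset (Fin N → Fin 2),
      (2 : ℝ) ^ ((1 - 11 * Real.sqrt ε * Real.logb 2 (1 / ε)) * N) ≤ C.card ∧
      ∀ s : Fin (⌈(1 - ε) * N⌉₊) → Fin 2, ∀ u ∈ C, ∀ v ∈ C,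
        IsSubseq s u → IsSubseq s v → u = v} = Set.univ := by
    apply Set.eq_univ_of_forall
    intro N
    set ℓ := ⌈(1 - ε) * N⌉₊ with hℓdef
    have hℓN : ℓ ≤ N := by
      rw [hℓdef]
      apply Nat.ceil_le.2
      have : (0 : ℝ) ≤ N := Nat.cast_nonneg N
      nlinarith
    have hkbound : ((N - ℓ : ℕ) : ℝ) ≤ ε * N := by
      rw [Nat.cast_sub hℓN]
      have := Nat.le_ceil ((1 - ε) * N)
      rw [← hℓdef] at this
      linarith
    obtain ⟨C, hC1, hC2⟩ := exists_good_code N ℓ hℓN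
    refine ⟨C, ?_, hC2⟩
    set M := N.choose ℓ * (N.choose ℓ * 2 ^ (N - ℓ)) with hMdef
    have hMpos : 0 < M := by
      have h1 : 0 < N.choose ℓ := Nat.choose_pos hℓN
      have h2 : 0 < 2 ^ (N - ℓ) := Nat.pow_pos (by norm_num)
      positivity
    have hMposR : (0 : ℝ) < (M : ℝ) := by exact_mod_cast hMpos
    have hMreal : (M : ℝ) ≤ (2 : ℝ) ^ (11 * Real.sqrt ε * Real.logb 2 (1 / ε) * N) := by
      have := key_bound (N := N) (ℓ := ℓ) ε hε hε2.le hℓN hkbound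
      rw [hMdef]
      push_cast
      exact this
    have hcard : (2 : ℝ) ^ (N : ℕ) ≤ (C.card : ℝ) * (M : ℝ) := by
      exact_mod_cast hC1
    have hexp : (1 - 11 * Real.sqrt ε * Real.logb 2 (1 / ε)) * (N : ℝ) =
        (N : ℝ) - 11 * Real.sqrt ε * Real.logb 2 (1 / ε) * N := by ring
    rw [hexp, Real.rpow_sub two_pos]
    have h2N : (2 : ℝ) ^ ((N : ℕ) : ℝ) = (2 : ℝ) ^ (N : ℕ) := Real.rpow_natCast 2 N
    rw [h2N]
    calc (2 : ℝ) ^ (N : ℕ) / (2 : ℝ) ^ (11 * Real.sqrt ε * Real.logb 2 (1 / ε) * N)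
        ≤ (2 : ℝ) ^ (N : ℕ) / (M : ℝ) := by gcongr
      _ ≤ (C.card : ℝ) := by
          rw [div_le_iff₀ hMposR]
          exact hcard
  rw [huniv]
  exact Set.infinite_univ
end

section
/- There exist absolute constants c > 0, C' > 0 and m₀ such that for every ε with 0 < ε < 1/2 and every m ≥ m₀, there exists a code C ⊆ {0,1}^m with |C| ≥ 2^{c·ε²·m} that is (1/2 − ε, L) list-decodable from deletions with list size L ≤ C'/ε². (Special case of Theorem 5.2 of the paper: constant-rate binary codes list-decodable from a 1/2 − ε fraction of deletions with list size O(1/ε²).) -/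
set_option maxHeartbeats 1000000

open Finset Real

attribute [local instance] Classical.propDecidable


lemma fin2_ne_ne {a b c : Fin 2} (h1 : a ≠ c) (h2 : b ≠ c) : a = b := by
  have h1' : a.val ≠ c.val := by simpa [Fin.ext_iff] using h1
  have h2' : b.val ≠ c.val := by simpa [Fin.ext_iff] using h2
  have := a.isLt; have := b.isLt; have := c.isLt
  exact Fin.ext (by omega)

lemma strictMono_fin_id {n : ℕ} {f : Fin n → Fin n} (hf : StrictMono f) : ∀ j, f j = j := by
  intro j
  have hle : j ≤ f j := @StrictMono.le_apply (Fin n) _ (inferInstanceAs (WellFoundedLT (Fin n))) f hf j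
  refine le_antisymm ?_ hle
  have h2 : StrictMono (fun a : Fin n => (f (a.rev)).rev) := by
    intro a b hab
    simp only [Fin.rev_lt_rev]
    exact hf (by simpa [Fin.rev_lt_rev] using hab)
  have h3 : j.rev ≤ (f (j.rev.rev)).rev := @StrictMono.le_apply (Fin n) _ (inferInstanceAs (WellFoundedLT (Fin n))) (fun a : Fin n => (f (a.rev)).rev) h2 j.rev
  rw [Fin.rev_rev] at h3
  rwa [Fin.rev_le_rev] at h3

lemma subseq_eq_of_len_eq {n : ℕ} {s u : Fin n → Fin 2} (h : IsSubseq s u) : u = s := by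
  obtain ⟨f, hf, hfe⟩ := h
  funext j
  have := hfe j
  rwa [strictMono_fin_id hf] at this

lemma subseq_tail_of_head_eq {ℓ m : ℕ} {s : Fin (ℓ+1) → Fin 2} {u : Fin (m+1) → Fin 2}
    (h : IsSubseq s u) : IsSubseq (Fin.tail s) (Fin.tail u) := by
  obtain ⟨f, hf, hfe⟩ := h
  have hne : ∀ j : Fin ℓ, f j.succ ≠ 0 := by
    intro j
    have : f 0 < f j.succ := hf (Fin.succ_pos j)
    exact Fin.ne_of_gt (lt_of_le_of_lt (Fin.zero_le _) this)
  refine ⟨fun j => (f j.succ).pred (hne j), ?_, ?_⟩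
  · exact Fin.strictMono_pred_comp hne (hf.comp Fin.strictMono_succ)
  · intro j
    simp only [Fin.tail, Fin.succ_pred]
    exact hfe j.succ

lemma subseq_of_head_ne {ℓ m : ℕ} {s : Fin (ℓ+1) → Fin 2} {u : Fin (m+1) → Fin 2}
    (h : IsSubseq s u) (hne0 : u 0 ≠ s 0) : IsSubseq s (Fin.tail u) := by
  obtain ⟨f, hf, hfe⟩ := h
  have hne : ∀ j, f j ≠ 0 := by
    intro j
    intro hj
    have h0 : f 0 = 0 := by
      rcases Fin.eq_zero_or_eq_succ j with rfl | ⟨k, rfl⟩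
      · exact hj
      · exact le_antisymm (by rw [← hj]; exact (hf (Fin.succ_pos k)).le) (Fin.zero_le _)
    exact hne0 (by rw [← hfe 0, h0])
  refine ⟨fun j => (f j).pred (hne j), Fin.strictMono_pred_comp hne hf, ?_⟩
  intro j
  simp only [Fin.tail, Fin.succ_pred]
  exact hfe j

lemma sum_choose_pascal (m D : ℕ) :
    ∑ i ∈ range (D+1), (m+1).choose i
      = ∑ i ∈ range (D+1), m.choose i + ∑ i ∈ range D, m.choose i := by
  induction D with
  | zero => simp
  | succ D ihD =>
    rw [Finset.sum_range_succ (fun i => (m+1).choose i) (D+1),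
      Finset.sum_range_succ (fun i => m.choose i) (D+1),
      Finset.sum_range_succ (fun i => m.choose i) D, ihD,
      Nat.choose_succ_succ m D]
    simp only [Nat.succ_eq_add_one, Finset.sum_range_succ]
    omega

theorem card_supseq_le (m : ℕ) : ∀ (ℓ : ℕ) (s : Fin ℓ → Fin 2),
    ((univ : Finset (Fin m → Fin 2)).filter (fun u => IsSubseq s u)).card
      ≤ ∑ i ∈ range (m - ℓ + 1), m.choose i := by
  induction m with
  | zero =>
    intro ℓ s
    calc _ ≤ (univ : Finset (Fin 0 → Fin 2)).card := card_filter_le _ _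
    _ = 1 := by simp
    _ ≤ _ := by simp
  | succ m ih =>
    intro ℓ s
    match ℓ, s with
    | 0, s =>
      calc _ ≤ (univ : Finset (Fin (m+1) → Fin 2)).card := card_filter_le _ _
      _ = 2^(m+1) := by simp [Fintype.card_fun]
      _ ≤ _ := by
            rw [Nat.sub_zero, Nat.sum_range_choose]
    | (ℓ'+1), s =>
      rcases lt_or_ge m ℓ' with hlm | hlm
      · -- length too long : empty
        have : ((univ : Finset (Fin (m+1) → Fin 2)).filter (fun u => IsSubseq s u)) = ∅ := by
          rw [Finset.filter_eq_empty_iff]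
          intro u _
          rintro ⟨f, hf, -⟩
          have := Fintype.card_le_of_injective f hf.injective
          simp only [Fintype.card_fin] at this
          omega
        rw [this]
        simp
      rcases eq_or_lt_of_le hlm with heq | hlt
      · -- ℓ' = m : subsingleton
        subst heq
        have hsub : ((univ : Finset (Fin (ℓ'+1) → Fin 2)).filter (fun u => IsSubseq s u)) ⊆ {s} := by
          intro u hu
          simp only [mem_filter] at hu
          simp [subseq_eq_of_len_eq hu.2]
        have h1 : (ℓ'+1).choose 0 ≤ ∑ i ∈ range (ℓ' + 1 - (ℓ' + 1) + 1), (ℓ'+1).choose i :=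
          Finset.single_le_sum (fun i _ => Nat.zero_le _) (by simp)
        calc _ ≤ ({s} : Finset _).card := card_le_card hsub
        _ = 1 := by simp
        _ ≤ _ := le_trans (by simp) h1
      · -- main case : ℓ' < m
        have hkey : ((univ : Finset (Fin (m+1) → Fin 2)).filter (fun u => IsSubseq s u)).card
            ≤ ((univ : Finset (Fin m → Fin 2)).filter (fun u => IsSubseq (Fin.tail s) u)).card
              + ((univ : Finset (Fin m → Fin 2)).filter (fun u => IsSubseq s u)).card := by
          rw [← Finset.card_filter_add_card_filter_not (s :=
            ((univ : Finset (Fin (m+1) → Fin 2)).filter (fun u => IsSubseq s u)))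
            (p := fun u => u 0 = s 0)]
          rw [Finset.filter_filter, Finset.filter_filter]
          gcongr
          · refine Finset.card_le_card_of_injOn Fin.tail ?_ ?_
            · intro u hu
              rw [Finset.mem_coe, Finset.mem_filter] at hu ⊢
              exact ⟨mem_univ _, subseq_tail_of_head_eq hu.2.1⟩
            · intro u hu v hv htail
              simp only [Finset.coe_filter, Set.mem_setOf_eq] at hu hv
              rw [← Fin.cons_self_tail u, ← Fin.cons_self_tail v, hu.2.2, hv.2.2, htail]
          · refine Finset.card_le_card_of_injOn Fin.tail ?_ ?_
            · intro u hu
              rw [Finset.mem_coe, Finset.mem_filter] at hu ⊢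
              exact ⟨mem_univ _, subseq_of_head_ne hu.2.1 hu.2.2⟩
            · intro u hu v hv htail
              simp only [Finset.coe_filter, Set.mem_setOf_eq] at hu hv
              have h2 : u 0 = v 0 := fin2_ne_ne hu.2.2 hv.2.2
              rw [← Fin.cons_self_tail u, ← Fin.cons_self_tail v, h2, htail]
        refine hkey.trans ?_
        have h1 := ih ℓ' (Fin.tail s)
        have h2 := ih (ℓ'+1) s
        have e2 : m + 1 - (ℓ' + 1) = m - ℓ' := by omega
        have e3 : m - (ℓ' + 1) + 1 = m - ℓ' := by omega
        rw [e2, sum_choose_pascal m (m - ℓ')]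
        rw [e3] at h2
        omega


lemma sum_choose_le_exp (m d : ℕ) (ε : ℝ) (hε0 : 0 < ε) (hε2 : ε < 1/2)
    (hd : (d:ℝ) ≤ (1/2 - ε) * m) :
    (∑ i ∈ range (d+1), (m.choose i : ℝ)) ≤ 2^m * Real.exp (-(ε^2*(m:ℝ))/2) := by
  have hm0 : (0:ℝ) ≤ (m:ℝ) := Nat.cast_nonneg m
  set x : ℝ := 1 - ε with hxdef
  have hx0 : 0 < x := by simp only [hxdef]; linarith
  have hx1 : x ≤ 1 := by simp only [hxdef]; linarith
  have hdm : d ≤ m := by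
    have : (d:ℝ) ≤ (m:ℝ) := le_trans hd (by nlinarith)
    exact_mod_cast this
  -- step 1
  have h1 : (∑ i ∈ range (d+1), (m.choose i : ℝ)) * x^d ≤ (1+x)^m := by
    calc (∑ i ∈ range (d+1), (m.choose i : ℝ)) * x^d
        = ∑ i ∈ range (d+1), (m.choose i : ℝ) * x^d := by rw [Finset.sum_mul]
      _ ≤ ∑ i ∈ range (d+1), (m.choose i : ℝ) * x^i := by
          refine Finset.sum_le_sum ?_
          intro i hi
          have : i ≤ d := by simpa [Nat.lt_succ_iff] using Finset.mem_range.mp hi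
          exact mul_le_mul_of_nonneg_left (pow_le_pow_of_le_one hx0.le hx1 this)
            (Nat.cast_nonneg _)
      _ ≤ ∑ i ∈ range (m+1), (m.choose i : ℝ) * x^i := by
          refine Finset.sum_le_sum_of_subset_of_nonneg ?_ ?_
          · exact Finset.range_subset_range.mpr (by omega)
          · intro i _ _
            positivity
      _ = (x+1)^m := by
          rw [add_pow]
          refine Finset.sum_congr rfl ?_
          intro i _
          ring
      _ = (1+x)^m := by ring
  -- step 2
  have h2 : (1+x)^m ≤ 2^m * Real.exp (-(ε*(m:ℝ))/2) := by
    have hbase : 1 + x ≤ 2 * Real.exp (-(ε/2)) := by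
      have := Real.add_one_le_exp (-(ε/2))
      nlinarith [Real.exp_pos (-(ε/2))]
    calc (1+x)^m ≤ (2 * Real.exp (-(ε/2)))^m := by
          refine pow_le_pow_left₀ (by linarith) hbase m
      _ = 2^m * Real.exp (-(ε/2))^m := by rw [mul_pow]
      _ = 2^m * Real.exp (-(ε*(m:ℝ))/2) := by
          rw [← Real.exp_nat_mul]
          ring_nf
  -- step 3 : x^d ≥ exp(-εd/(1-ε))
  have hx1ne : (1:ℝ) - ε ≠ 0 := by linarith
  have h3 : Real.exp (-(ε/(1-ε)))^d ≤ x^d := by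
    refine pow_le_pow_left₀ (Real.exp_pos _).le ?_ d
    have h4 : 1 + ε/(1-ε) ≤ Real.exp (ε/(1-ε)) := by
      have := Real.add_one_le_exp (ε/(1-ε))
      linarith
    have h5 : 1 + ε/(1-ε) = 1/(1-ε) := by field_simp; ring
    rw [Real.exp_neg]
    rw [h5] at h4
    have h6 : 0 < Real.exp (ε/(1-ε)) := Real.exp_pos _
    rw [inv_le_comm₀ h6 hx0]
    calc x⁻¹ = 1/(1-ε) := by rw [hxdef, one_div]
      _ ≤ Real.exp (ε/(1-ε)) := h4
  -- combine
  have hxd : 0 < x^d := pow_pos hx0 d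
  have key : (∑ i ∈ range (d+1), (m.choose i : ℝ))
      ≤ 2^m * Real.exp (-(ε*(m:ℝ))/2) * Real.exp (ε*(d:ℝ)/(1-ε)) := by
    rw [← Real.exp_nat_mul] at h3
    have h7 : (∑ i ∈ range (d+1), (m.choose i : ℝ)) * x^d
        ≤ 2^m * Real.exp (-(ε*(m:ℝ))/2) := h1.trans h2
    have h8 : (∑ i ∈ range (d+1), (m.choose i : ℝ))
        ≤ 2^m * Real.exp (-(ε*(m:ℝ))/2) / x^d := by
      rw [le_div_iff₀ hxd]; exact h7
    refine h8.trans ?_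
    rw [div_le_iff₀ hxd]
    have h9 : Real.exp (ε*(d:ℝ)/(1-ε)) * Real.exp ((d:ℝ) * -(ε/(1-ε))) = 1 := by
      rw [← Real.exp_add]
      rw [show ε*(d:ℝ)/(1-ε) + (d:ℝ) * -(ε/(1-ε)) = 0 by ring]
      exact Real.exp_zero
    have h10 : 2^m * Real.exp (-(ε*(m:ℝ))/2) * Real.exp (ε*(d:ℝ)/(1-ε)) * Real.exp ((d:ℝ) * -(ε/(1-ε)))
        = 2^m * Real.exp (-(ε*(m:ℝ))/2) := by
      rw [mul_assoc, h9, mul_one]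
    calc 2^m * Real.exp (-(ε*(m:ℝ))/2)
        = 2^m * Real.exp (-(ε*(m:ℝ))/2) * Real.exp (ε*(d:ℝ)/(1-ε)) * Real.exp ((d:ℝ) * -(ε/(1-ε))) := h10.symm
      _ ≤ 2^m * Real.exp (-(ε*(m:ℝ))/2) * Real.exp (ε*(d:ℝ)/(1-ε)) * x^d := by
          refine mul_le_mul_of_nonneg_left h3 ?_
          positivity
  refine key.trans ?_
  rw [mul_assoc, ← Real.exp_add]
  refine mul_le_mul_of_nonneg_left ?_ (by positivity)
  refine Real.exp_le_exp.mpr ?_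
  have hd' : ε*(d:ℝ)/(1-ε) ≤ ε*((1/2-ε)*m)/(1-ε) := by
    have : 0 < 1 - ε := by linarith
    gcongr
  have h11 : ε*((1/2-ε)*(m:ℝ))/(1-ε) ≤ -(ε^2*(m:ℝ))/2 + (ε*(m:ℝ))/2 := by
    rw [div_le_iff₀ (show (0:ℝ) < 1-ε by linarith)]
    nlinarith [mul_nonneg (mul_nonneg hε0.le (mul_nonneg hε0.le hε0.le)) hm0]
  linarith



lemma card_piFinset_constrained {X : Type*} [Fintype X] [DecidableEq X] {N : ℕ}
    (K : Finset (Fin N)) (B : Finset X) :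
    (Fintype.piFinset (fun i : Fin N => if i ∈ K then B else (univ : Finset X))).card
      = B.card ^ K.card * (Fintype.card X) ^ (N - K.card) := by
  rw [Fintype.card_piFinset]
  have h1 : ∀ i : Fin N, (if i ∈ K then B else (univ : Finset X)).card
      = if i ∈ K then B.card else Fintype.card X := by
    intro i; split <;> simp [Finset.card_univ]
  simp only [h1]
  rw [Finset.prod_ite]
  have h2 : (univ.filter (fun i : Fin N => i ∈ K)) = K := by
    ext i; simp
  have h3 : (univ.filter (fun i : Fin N => ¬ i ∈ K)) = Kᶜ := by
    ext i; simp
  rw [h2, h3, Finset.prod_const, Finset.prod_const, Finset.card_compl]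
  simp [Fintype.card_fin]

lemma count_manyhits {X : Type*} [Fintype X] [DecidableEq X] (N L : ℕ) (B : Finset X) :
    ((univ : Finset (Fin N → X)).filter
        (fun t => L+1 ≤ ((univ : Finset (Fin N)).filter (fun i => t i ∈ B)).card)).card
      ≤ N.choose (L+1) * B.card^(L+1) * (Fintype.card X)^(N-(L+1)) := by
  have hsub : ((univ : Finset (Fin N → X)).filter
        (fun t => L+1 ≤ ((univ : Finset (Fin N)).filter (fun i => t i ∈ B)).card))
      ⊆ (Finset.powersetCard (L+1) (univ : Finset (Fin N))).biUnion
          (fun K => Fintype.piFinset (fun i : Fin N => if i ∈ K then B else (univ : Finset X))) := by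
    intro t ht
    rw [Finset.mem_filter] at ht
    obtain ⟨K, hKsub, hKcard⟩ := Finset.exists_subset_card_eq ht.2
    rw [Finset.mem_biUnion]
    refine ⟨K, ?_, ?_⟩
    · rw [Finset.mem_powersetCard]
      exact ⟨Finset.subset_univ _, hKcard⟩
    · rw [Fintype.mem_piFinset]
      intro i
      split
      · next h => exact (Finset.mem_filter.mp (hKsub h)).2
      · exact Finset.mem_univ _
  refine le_trans (Finset.card_le_card hsub) ?_
  refine le_trans (Finset.card_biUnion_le) ?_
  have h4 : ∀ K ∈ Finset.powersetCard (L+1) (univ : Finset (Fin N)),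
      (Fintype.piFinset (fun i : Fin N => if i ∈ K then B else (univ : Finset X))).card
        = B.card^(L+1) * (Fintype.card X)^(N-(L+1)) := by
    intro K hK
    rw [card_piFinset_constrained K B, (Finset.mem_powersetCard.mp hK).2]
  rw [Finset.sum_congr rfl h4, Finset.sum_const, Finset.card_powersetCard, Finset.card_univ,
    Fintype.card_fin, smul_eq_mul, mul_assoc]

lemma count_noninj {X : Type*} [Fintype X] [DecidableEq X] (N : ℕ) (hN : 2 ≤ N) :
    ((univ : Finset (Fin N → X)).filter (fun t => ¬ Function.Injective t)).card
      ≤ N^2 * (Fintype.card X)^(N-1) := by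
  have hsub : ((univ : Finset (Fin N → X)).filter (fun t => ¬ Function.Injective t))
      ⊆ (((univ : Finset (Fin N)) ×ˢ (univ : Finset (Fin N))).filter
            (fun p => p.1 ≠ p.2)).biUnion
          (fun p => (univ : Finset X).biUnion (fun c =>
            Fintype.piFinset (fun k : Fin N =>
              if k ∈ ({p.1, p.2} : Finset (Fin N)) then ({c} : Finset X) else (univ : Finset X)))) := by
    intro t ht
    rw [Finset.mem_filter] at ht
    obtain ⟨a, b, hab, hne⟩ := Function.not_injective_iff.mp ht.2
    rw [Finset.mem_biUnion]
    refine ⟨(a, b), ?_, ?_⟩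
    · rw [Finset.mem_filter]
      exact ⟨Finset.mem_product.mpr ⟨mem_univ _, mem_univ _⟩, hne⟩
    · rw [Finset.mem_biUnion]
      refine ⟨t a, Finset.mem_univ _, ?_⟩
      rw [Fintype.mem_piFinset]
      intro k
      split
      · next h =>
        rw [Finset.mem_insert, Finset.mem_singleton] at h
        rcases h with rfl | rfl
        · simp
        · simp [hab]
      · exact Finset.mem_univ _
  refine le_trans (Finset.card_le_card hsub) ?_
  refine le_trans (Finset.card_biUnion_le) ?_
  have h4 : ∀ p ∈ (((univ : Finset (Fin N)) ×ˢ (univ : Finset (Fin N))).filter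
      (fun p => p.1 ≠ p.2)),
      ((univ : Finset X).biUnion (fun c =>
        Fintype.piFinset (fun k : Fin N =>
          if k ∈ ({p.1, p.2} : Finset (Fin N)) then ({c} : Finset X) else (univ : Finset X)))).card
      ≤ (Fintype.card X)^(N-1) := by
    intro p hp
    rw [Finset.mem_filter] at hp
    refine le_trans (Finset.card_biUnion_le) ?_
    have h5 : ∀ c ∈ (univ : Finset X),
        (Fintype.piFinset (fun k : Fin N =>
          if k ∈ ({p.1, p.2} : Finset (Fin N)) then ({c} : Finset X) else (univ : Finset X))).card
        = (Fintype.card X)^(N-2) := by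
      intro c _
      rw [card_piFinset_constrained]
      rw [Finset.card_pair hp.2]
      simp
    rw [Finset.sum_congr rfl h5, Finset.sum_const, Finset.card_univ, smul_eq_mul]
    rw [← pow_succ']
    have : N - 2 + 1 = N - 1 := by omega
    rw [this]
  refine le_trans (Finset.sum_le_sum h4) ?_
  rw [Finset.sum_const, smul_eq_mul]
  have h6 : (((univ : Finset (Fin N)) ×ˢ (univ : Finset (Fin N))).filter
      (fun p => p.1 ≠ p.2)).card ≤ N^2 := by
    refine le_trans (Finset.card_filter_le _ _) ?_
    rw [Finset.card_product, Finset.card_univ, Fintype.card_fin]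
    ring_nf
    omega
  exact Nat.mul_le_mul_right _ h6

lemma exists_good_tuple (m ℓ N L : ℕ) (hN2 : 2 ≤ N)
    (hnum : 2^ℓ * (N.choose (L+1) * (∑ i ∈ range (m-ℓ+1), m.choose i)^(L+1) * (2^m)^(N-(L+1)))
            + N^2 * (2^m)^(N-1) < (2^m)^N) :
    ∃ t : Fin N → (Fin m → Fin 2), Function.Injective t ∧
      ∀ s : Fin ℓ → Fin 2,
        ((univ : Finset (Fin N)).filter (fun i => IsSubseq s (t i))).card ≤ L := by
  by_contra hcon
  push_neg at hcon
  set X := Fin m → Fin 2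
  have hXcard : Fintype.card X = 2^m := by
    simp [X, Fintype.card_fun]
  set F := (univ : Finset (Fin N → X)).filter (fun t => ¬ Function.Injective t) with hF
  set G := (univ : Finset (Fin ℓ → Fin 2)).biUnion (fun s =>
      (univ : Finset (Fin N → X)).filter
        (fun t => L+1 ≤ ((univ : Finset (Fin N)).filter
          (fun i => t i ∈ (univ : Finset X).filter (fun u => IsSubseq s u))).card)) with hG
  have hcover : (univ : Finset (Fin N → X)) ⊆ F ∪ G := by
    intro t _
    by_cases hinj : Function.Injective t
    · obtain ⟨s, hs⟩ := hcon t hinj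
      refine Finset.mem_union_right _ ?_
      rw [Finset.mem_biUnion]
      refine ⟨s, Finset.mem_univ _, ?_⟩
      rw [Finset.mem_filter]
      refine ⟨Finset.mem_univ _, ?_⟩
      have : ((univ : Finset (Fin N)).filter
          (fun i => t i ∈ (univ : Finset X).filter (fun u => IsSubseq s u)))
          = ((univ : Finset (Fin N)).filter (fun i => IsSubseq s (t i))) := by
        refine Finset.filter_congr ?_
        intro i _
        simp
      rw [this]
      omega
    · exact Finset.mem_union_left _ (Finset.mem_filter.mpr ⟨Finset.mem_univ _, hinj⟩)
  have hcards : (2^m)^N ≤ F.card + G.card := by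
    calc (2^m)^N = (univ : Finset (Fin N → X)).card := by
          rw [Finset.card_univ, Fintype.card_fun, hXcard, Fintype.card_fin]
      _ ≤ (F ∪ G).card := Finset.card_le_card hcover
      _ ≤ F.card + G.card := Finset.card_union_le _ _
  have hFle : F.card ≤ N^2 * (2^m)^(N-1) := by
    have := count_noninj (X := X) N hN2
    rwa [hXcard] at this
  have hGle : G.card ≤ 2^ℓ * (N.choose (L+1) * (∑ i ∈ range (m-ℓ+1), m.choose i)^(L+1)
      * (2^m)^(N-(L+1))) := by
    refine le_trans (Finset.card_biUnion_le) ?_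
    have hone : ∀ s ∈ (univ : Finset (Fin ℓ → Fin 2)),
        ((univ : Finset (Fin N → X)).filter
          (fun t => L+1 ≤ ((univ : Finset (Fin N)).filter
            (fun i => t i ∈ (univ : Finset X).filter (fun u => IsSubseq s u))).card)).card
        ≤ N.choose (L+1) * (∑ i ∈ range (m-ℓ+1), m.choose i)^(L+1) * (2^m)^(N-(L+1)) := by
      intro s _
      refine le_trans (count_manyhits N L _) ?_
      rw [hXcard]
      have hBS := card_supseq_le m ℓ s
      have : ((univ : Finset X).filter (fun u => IsSubseq s u)).card ^ (L+1)
          ≤ (∑ i ∈ range (m-ℓ+1), m.choose i)^(L+1) := Nat.pow_le_pow_left hBS _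
      exact Nat.mul_le_mul_right _ (Nat.mul_le_mul_left _ this)
    refine le_trans (Finset.sum_le_sum hone) ?_
    rw [Finset.sum_const, Finset.card_univ, Fintype.card_fun, smul_eq_mul]
    simp [Fintype.card_fin]
  omega

lemma numeric_main (m ℓ N L : ℕ) (ε : ℝ) (hε0 : 0 < ε) (hε2 : ε < 1/2)
    (hm : 300 ≤ m) (hℓm : ℓ ≤ m)
    (hd : ((m - ℓ : ℕ):ℝ) ≤ (1/2 - ε) * m)
    (hNup : (N:ℝ) ≤ 2 * Real.exp (ε^2*m/10))
    (hL4 : 4/ε^2 ≤ (L:ℝ) + 1)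
    (hP : 6/ε ≤ Real.exp (ε^2*m/10))
    (hLN : L + 1 ≤ N) :
    2^ℓ * (N.choose (L+1) * (∑ i ∈ range (m-ℓ+1), m.choose i)^(L+1) * (2^m)^(N-(L+1)))
      + N^2 * (2^m)^(N-1) < (2^m)^N := by
  have hm' : (300:ℝ) ≤ m := by exact_mod_cast hm
  set β : ℝ := ε^2*m with hβdef
  have hβ0 : 0 ≤ β := by positivity
  have hβm : β ≤ (m:ℝ)/4 := by nlinarith
  -- β ≥ 20
  have h12 : (12:ℝ) ≤ Real.exp (β/10) := by
    refine le_trans ?_ hP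
    rw [le_div_iff₀ hε0]; linarith
  have hβ20 : 20 ≤ β := by
    by_contra hb
    push_neg at hb
    have h1 : Real.exp (β/10) < Real.exp 2 := Real.exp_lt_exp.mpr (by linarith)
    have h2 : Real.exp 2 < 12 := by
      have he := Real.exp_one_lt_d9
      have : Real.exp 2 = Real.exp 1 * Real.exp 1 := by
        rw [← Real.exp_add]; norm_num
      nlinarith [Real.exp_pos 1]
    linarith
  have hlog2 : Real.log 2 < 0.6931471808 := Real.log_two_lt_d9
  have hlog2' : 0.6931471803 < Real.log 2 := Real.log_two_gt_d9
  have h2exp : (2:ℝ) ≤ Real.exp (β/28) := by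
    rw [show (2:ℝ) = Real.exp (Real.log 2) by rw [Real.exp_log]; norm_num]
    exact Real.exp_le_exp.mpr (by linarith)
  have h2exp07 : (2:ℝ) ≤ Real.exp 0.7 := by
    rw [show (2:ℝ) = Real.exp (Real.log 2) by rw [Real.exp_log]; norm_num]
    exact Real.exp_le_exp.mpr (by linarith)
  have hE07 : (2:ℝ)^m ≤ Real.exp (0.7*m) := by
    calc (2:ℝ)^m ≤ (Real.exp 0.7)^m := pow_le_pow_left₀ (by norm_num) h2exp07 m
      _ = Real.exp (0.7*m) := by rw [← Real.exp_nat_mul]; ring_nf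
  have hElow : Real.exp (0.69*m) ≤ (2:ℝ)^m := by
    have h2low : Real.exp 0.69 ≤ 2 := by
      rw [show (2:ℝ) = Real.exp (Real.log 2) by rw [Real.exp_log]; norm_num]
      exact Real.exp_le_exp.mpr (by linarith)
    calc Real.exp (0.69*m) = (Real.exp 0.69)^m := by rw [← Real.exp_nat_mul]; ring_nf
      _ ≤ (2:ℝ)^m := pow_le_pow_left₀ (Real.exp_pos _).le h2low m
  -- cast goal to ℝ
  rw [← Nat.cast_lt (α := ℝ)]
  push_cast
  set E : ℝ := (2:ℝ)^m with hEdef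
  have hE0 : (0:ℝ) < E := by positivity
  have hE1 : (1:ℝ) ≤ E := one_le_pow₀ (by norm_num)
  set S : ℝ := ∑ i ∈ range (m-ℓ+1), (m.choose i : ℝ) with hSdef
  have hS0 : 0 ≤ S := Finset.sum_nonneg (fun i _ => Nat.cast_nonneg _)
  have hS : S ≤ E * Real.exp (-(β)/2) := by
    have := sum_choose_le_exp m (m-ℓ) ε hε0 hε2 hd
    simpa using this
  -- term 1
  have hterm1 : (2:ℝ)^ℓ * ((N.choose (L+1) : ℝ) * S^(L+1) * E^(N-(L+1))) ≤ E^N / 4 := by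
    have hc : ((N.choose (L+1) : ℕ):ℝ) ≤ (N:ℝ)^(L+1) := by
      exact_mod_cast Nat.choose_le_pow N (L+1)
    have hSpow : S^(L+1) ≤ (E * Real.exp (-β/2))^(L+1) :=
      pow_le_pow_left₀ hS0 hS _
    have hEsplit : E^(L+1) * E^(N-(L+1)) = E^N := by
      rw [← pow_add]
      congr 1
      omega
    have hsmall : (N:ℝ) * Real.exp (-β/2) ≤ Real.exp (-β/3) := by
      calc (N:ℝ) * Real.exp (-β/2) ≤ (2 * Real.exp (β/10)) * Real.exp (-β/2) := by
            refine mul_le_mul_of_nonneg_right hNup (Real.exp_pos _).le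
        _ ≤ (Real.exp (β/28) * Real.exp (β/10)) * Real.exp (-β/2) := by
            refine mul_le_mul_of_nonneg_right (mul_le_mul_of_nonneg_right h2exp (Real.exp_pos _).le) (Real.exp_pos _).le
        _ = Real.exp (β/28 + β/10 + -β/2) := by rw [← Real.exp_add, ← Real.exp_add]
        _ ≤ Real.exp (-β/3) := Real.exp_le_exp.mpr (by linarith)
    have hLN' : (4:ℝ)/ε^2 ≤ ((L:ℝ)+1) := hL4
    have hpow2 : Real.exp (-β/3)^(L+1) ≤ Real.exp (-(4*m)/3) := by
      rw [← Real.exp_nat_mul]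
      refine Real.exp_le_exp.mpr ?_
      have hβ3 : (0:ℝ) ≤ β/3 := by linarith
      have hβ' : (4/ε^2) * (β/3) ≤ ((L:ℝ)+1) * (β/3) :=
        mul_le_mul_of_nonneg_right hLN' hβ3
      have heq4 : (4/ε^2) * (β/3) = 4*(m:ℝ)/3 := by
        rw [hβdef]; field_simp
      push_cast
      nlinarith [hβ', heq4]
    calc (2:ℝ)^ℓ * ((N.choose (L+1) : ℝ) * S^(L+1) * E^(N-(L+1)))
        ≤ E * (((N:ℝ)^(L+1)) * (E * Real.exp (-β/2))^(L+1) * E^(N-(L+1))) := by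
          refine mul_le_mul ?_ ?_ ?_ ?_
          · exact pow_le_pow_right₀ (by norm_num) hℓm
          · refine mul_le_mul_of_nonneg_right (mul_le_mul hc hSpow (by positivity) (by positivity)) (by positivity)
          · positivity
          · positivity
      _ = ((N:ℝ) * Real.exp (-β/2))^(L+1) * (E^(L+1) * E^(N-(L+1))) * E := by
          rw [mul_pow, mul_pow]
          ring
      _ = ((N:ℝ) * Real.exp (-β/2))^(L+1) * E^N * E := by rw [hEsplit]
      _ ≤ (Real.exp (-β/3))^(L+1) * E^N * E := by
          refine mul_le_mul_of_nonneg_right (mul_le_mul_of_nonneg_right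
            (pow_le_pow_left₀ (by positivity) hsmall _) (by positivity)) hE0.le
      _ ≤ Real.exp (-(4*m)/3) * E^N * E := by
          refine mul_le_mul_of_nonneg_right (mul_le_mul_of_nonneg_right hpow2 (by positivity)) hE0.le
      _ ≤ E^N / 4 := by
          have h4E : 4 * E ≤ Real.exp (4*(m:ℝ)/3) := by
            calc 4 * E ≤ Real.exp 1.4 * Real.exp (0.7*m) := by
                  refine mul_le_mul ?_ hE07 hE0.le (Real.exp_pos _).le
                  nlinarith [h2exp07, Real.exp_pos (0.7:ℝ), Real.exp_add 0.7 0.7]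
              _ = Real.exp (1.4 + 0.7*m) := by rw [← Real.exp_add]
              _ ≤ Real.exp (4*(m:ℝ)/3) := Real.exp_le_exp.mpr (by nlinarith)
          have hx : Real.exp (-(4*(m:ℝ))/3) * E ≤ 1/4 := by
            rw [show -(4*(m:ℝ))/3 = -(4*(m:ℝ)/3) by ring, Real.exp_neg]
            rw [inv_mul_le_iff₀ (Real.exp_pos _)]
            linarith
          calc Real.exp (-(4*(m:ℝ))/3) * E^N * E = (Real.exp (-(4*(m:ℝ))/3) * E) * E^N := by ring
            _ ≤ (1/4) * E^N := mul_le_mul_of_nonneg_right hx (by positivity)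
            _ = E^N/4 := by ring

  -- term 2
  have hterm2 : (N:ℝ)^2 * E^(N-1) ≤ E^N / 4 := by
    have hEsplit2 : E^1 * E^(N-1) = E^N := by
      rw [← pow_add]
      congr 1
      omega
    have hN2 : (N:ℝ)^2 ≤ 4 * Real.exp (m/20) := by
      have : (N:ℝ)^2 ≤ (2*Real.exp (β/10))^2 := by
        refine pow_le_pow_left₀ (Nat.cast_nonneg _) hNup 2
      calc (N:ℝ)^2 ≤ (2*Real.exp (β/10))^2 := this
        _ = 4 * (Real.exp (β/10))^2 := by ring
        _ = 4 * Real.exp (β/5) := by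
            rw [sq, ← Real.exp_add]; congr 1; ring
        _ ≤ 4 * Real.exp (m/20) := by
            refine mul_le_mul_of_nonneg_left (Real.exp_le_exp.mpr (by linarith)) (by norm_num)
    have h16 : (16:ℝ) ≤ Real.exp 3 := by
      have he := Real.exp_one_gt_d9
      have h3 : Real.exp 3 = Real.exp 1 * Real.exp 1 * Real.exp 1 := by
        rw [← Real.exp_add, ← Real.exp_add]; norm_num
      nlinarith [Real.exp_pos 1]
    have hkey : 4 * ((N:ℝ)^2) ≤ E := by
      calc 4 * ((N:ℝ)^2) ≤ 4 * (4 * Real.exp (m/20)) := by linarith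
        _ = 16 * Real.exp (m/20) := by ring
        _ ≤ Real.exp 3 * Real.exp (m/20) := by
            refine mul_le_mul_of_nonneg_right h16 (Real.exp_pos _).le
        _ = Real.exp (3 + m/20) := by rw [← Real.exp_add]
        _ ≤ Real.exp (0.69*m) := Real.exp_le_exp.mpr (by nlinarith)
        _ ≤ E := hElow
    calc (N:ℝ)^2 * E^(N-1) ≤ (E/4) * E^(N-1) := by
          refine mul_le_mul_of_nonneg_right (by linarith) (by positivity)
      _ = (E^1 * E^(N-1))/4 := by ring
      _ = E^N / 4 := by rw [hEsplit2]
  have hpos : (0:ℝ) < E^N := by positivity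
  calc (2:ℝ)^ℓ * ((N.choose (L+1) : ℝ) * S^(L+1) * E^(N-(L+1))) + (N:ℝ)^2 * E^(N-1)
      ≤ E^N/4 + E^N/4 := by linarith
    _ < E^N := by linarith


/-- There exist absolute constants `c > 0`, `C' > 0` and `m₀` such that for every
`ε ∈ (0, 1/2)` and every `m ≥ m₀`, there exists a code `C ⊆ {0,1}^m` with
`|C| ≥ 2^{c ε² m}` that is `(1/2 - ε, L)` list-decodable from deletions — every binary
string of length `⌈(1/2+ε)m⌉` is a subsequence of at most `L` codewords — with list size
`L ≤ C'/ε²`. -/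
theorem constant_rate_list_decodable :
    ∃ c : ℝ, 0 < c ∧ ∃ C' : ℝ, 0 < C' ∧ ∃ m₀ : ℕ,
      ∀ ε : ℝ, 0 < ε → ε < 1 / 2 → ∀ m : ℕ, m₀ ≤ m →
        ∃ C : Finset (Fin m → Fin 2), ∃ L : ℕ,
          (2 : ℝ) ^ (c * ε ^ 2 * m) ≤ C.card ∧
          (L : ℝ) ≤ C' / ε ^ 2 ∧
          ∀ s : Fin (⌈(1 / 2 + ε) * m⌉₊) → Fin 2,
            {u | u ∈ C ∧ IsSubseq s u}.ncard ≤ L := by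
  refine ⟨1/10, by norm_num, 5, by norm_num, 300, ?_⟩
  intro ε hε0 hε2 m hm
  have hm' : (300:ℝ) ≤ (m:ℝ) := by exact_mod_cast hm
  have hε1 : ε ≤ 1 := by linarith
  set ℓ : ℕ := ⌈(1 / 2 + ε) * (m:ℝ)⌉₊ with hℓdef
  set L : ℕ := ⌈4/ε^2⌉₊ with hLdef
  set N : ℕ := ⌈Real.exp (ε^2*(m:ℝ)/10)⌉₊ with hNdef
  have hexp0 : (0:ℝ) ≤ ε^2*(m:ℝ)/10 := by positivity
  have hexp1 : (1:ℝ) ≤ Real.exp (ε^2*(m:ℝ)/10) := Real.one_le_exp hexp0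
  have hL4 : 4/ε^2 ≤ (L:ℝ) := Nat.le_ceil _
  have hL5 : (L:ℝ) ≤ 5/ε^2 := by
    have h1 : (L:ℝ) < 4/ε^2 + 1 := Nat.ceil_lt_add_one (by positivity)
    have h2 : (1:ℝ) ≤ 1/ε^2 := by
      rw [le_div_iff₀ (by positivity)]
      nlinarith
    have : 4/ε^2 + 1/ε^2 = 5/ε^2 := by ring
    linarith
  have hNlow : Real.exp (ε^2*(m:ℝ)/10) ≤ (N:ℝ) := Nat.le_ceil _
  have hNup : (N:ℝ) ≤ 2 * Real.exp (ε^2*(m:ℝ)/10) := by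
    have h1 : (N:ℝ) < Real.exp (ε^2*(m:ℝ)/10) + 1 := Nat.ceil_lt_add_one (by positivity)
    linarith
  have hlog2 : Real.log 2 < 0.6931471808 := Real.log_two_lt_d9
  have hlog2' : 0.6931471803 < Real.log 2 := Real.log_two_gt_d9
  have hcard : (2:ℝ) ^ (1/10 * ε^2 * (m:ℝ)) ≤ (N:ℝ) := by
    have hx0 : (0:ℝ) ≤ 1/10 * ε^2 * (m:ℝ) := by positivity
    rw [Real.rpow_def_of_pos (by norm_num : (0:ℝ) < 2)]
    refine le_trans ?_ hNlow
    refine Real.exp_le_exp.mpr ?_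
    have : Real.log 2 * (1/10 * ε^2 * (m:ℝ)) ≤ 1 * (1/10 * ε^2 * (m:ℝ)) := by
      refine mul_le_mul_of_nonneg_right (by linarith) hx0
    linarith
  have hℓm : ℓ ≤ m := by
    rw [hℓdef]
    refine Nat.ceil_le.mpr ?_
    nlinarith [Nat.cast_nonneg (α := ℝ) m]
  have hd : ((m - ℓ : ℕ):ℝ) ≤ (1/2 - ε) * (m:ℝ) := by
    rw [Nat.cast_sub hℓm]
    have h1 : (1 / 2 + ε) * (m:ℝ) ≤ (ℓ:ℝ) := Nat.le_ceil _
    linarith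
  have hN2m : N ≤ 2^m := by
    have h2low : Real.exp 0.69 ≤ 2 := by
      rw [show (2:ℝ) = Real.exp (Real.log 2) by rw [Real.exp_log]; norm_num]
      exact Real.exp_le_exp.mpr (by linarith)
    have hElow : Real.exp (0.69*(m:ℝ)) ≤ (2:ℝ)^m := by
      calc Real.exp (0.69*(m:ℝ)) = (Real.exp 0.69)^m := by rw [← Real.exp_nat_mul]; ring_nf
        _ ≤ (2:ℝ)^m := pow_le_pow_left₀ (Real.exp_pos _).le h2low m
    have h2e : (2:ℝ) ≤ Real.exp 1 := by
      have := Real.exp_one_gt_d9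
      linarith
    have hβm : ε^2*(m:ℝ)/10 ≤ (m:ℝ)/40 := by nlinarith
    have : (N:ℝ) ≤ (2:ℝ)^m := by
      calc (N:ℝ) ≤ 2 * Real.exp (ε^2*(m:ℝ)/10) := hNup
        _ ≤ Real.exp 1 * Real.exp ((m:ℝ)/40) := by
            refine mul_le_mul h2e (Real.exp_le_exp.mpr hβm) (Real.exp_pos _).le (Real.exp_pos _).le
        _ = Real.exp (1 + (m:ℝ)/40) := by rw [← Real.exp_add]
        _ ≤ Real.exp (0.69*(m:ℝ)) := Real.exp_le_exp.mpr (by nlinarith)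
        _ ≤ (2:ℝ)^m := hElow
    have h2m : ((2^m : ℕ):ℝ) = (2:ℝ)^m := by push_cast; ring
    rw [← Nat.cast_le (α := ℝ), h2m]
    exact this
  by_cases hNL : N ≤ L
  · -- trivial branch
    have hNcard : N ≤ (univ : Finset (Fin m → Fin 2)).card := by
      rw [Finset.card_univ, Fintype.card_fun]
      simpa using hN2m
    obtain ⟨C, _, hCcard⟩ := Finset.exists_subset_card_eq hNcard
    refine ⟨C, L, ?_, ?_, ?_⟩
    · rw [hCcard]; exact hcard
    · exact hL5
    · intro s
      calc {u | u ∈ C ∧ IsSubseq s u}.ncard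
          ≤ (↑C : Set (Fin m → Fin 2)).ncard :=
            Set.ncard_le_ncard (fun u hu => hu.1) C.finite_toSet
        _ = C.card := Set.ncard_coe_finset C
        _ = N := hCcard
        _ ≤ L := hNL
  · -- main branch
    push_neg at hNL
    have hLN : L + 1 ≤ N := hNL
    have hL1 : 1 ≤ L := by
      rw [hLdef]
      exact Nat.one_le_ceil_iff.mpr (by positivity)
    have hN2 : 2 ≤ N := by omega
    have hP : 6/ε ≤ Real.exp (ε^2*(m:ℝ)/10) := by
      have h1 : (N:ℝ) < Real.exp (ε^2*(m:ℝ)/10) + 1 := Nat.ceil_lt_add_one (by positivity)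
      have h2 : (L:ℝ) + 1 ≤ (N:ℝ) := by exact_mod_cast hLN
      have h3 : 6/ε ≤ 4/ε^2 := by
        rw [div_le_div_iff₀ hε0 (by positivity)]
        nlinarith
      linarith
    have hnum := numeric_main m ℓ N L ε hε0 hε2 hm hℓm hd hNup (by linarith) hP hLN
    obtain ⟨t, htinj, htgood⟩ := exists_good_tuple m ℓ N L hN2 hnum
    refine ⟨Finset.image t univ, L, ?_, hL5, ?_⟩
    · rw [Finset.card_image_of_injective _ htinj, Finset.card_univ, Fintype.card_fin]
      exact hcard
    · intro s
      have hset : {u | u ∈ Finset.image t univ ∧ IsSubseq s u}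
          = ↑((Finset.image t univ).filter (fun u => IsSubseq s u)) := by
        ext u
        simp [Finset.mem_filter]
      rw [hset, Set.ncard_coe_finset, Finset.filter_image]
      exact le_trans (Finset.card_image_le) (htgood s)
end

section
/- Let δ, γ ∈ (0,1) with δ + γ < 1, and let k be an integer with k ≥ 2^{2h(δ)/γ}. Then for every positive integer m there exists a code C ⊆ [k]^m with |C| ≥ k^{(1−δ−γ)m} such that every string over [k] of length ⌈(1−δ)m⌉ is a subsequence of at most one codeword of C (equivalently, every two distinct codewords have longest common subsequence of length less than (1−δ)m). (Theorem 2.4 of the paper, general alphabet case.) -/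
/-- The binary entropy function `h(x) = x log₂(1/x) + (1-x) log₂(1/(1-x))`. -/
noncomputable def binEnt (x : ℝ) : ℝ :=
  x * Real.logb 2 (1 / x) + (1 - x) * Real.logb 2 (1 / (1 - x))

open Finset

lemma greedy_aux {α : Type*} [DecidableEq α] (B : α → Finset α)
    (hsym : ∀ u v, u ∈ B v → v ∈ B u) (hmem : ∀ u, u ∈ B u)
    {D : ℕ} (hD : ∀ u, (B u).card ≤ D) :
    ∀ S : Finset α, ∃ C : Finset α, C ⊆ S ∧ S.card ≤ D * C.card ∧
      ∀ u ∈ C, ∀ v ∈ C, v ∈ B u → u = v := by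
  intro S
  induction S using Finset.strongInduction with
  | _ S ih =>
    rcases S.eq_empty_or_nonempty with rfl | ⟨u, hu⟩
    · exact ⟨∅, by simp⟩
    · have hss : S \ B u ⊂ S := by
        rw [Finset.ssubset_iff_of_subset (Finset.sdiff_subset)]
        exact ⟨u, hu, by simp [hmem u]⟩
      obtain ⟨C, hCS, hcard, hpair⟩ := ih _ hss
      have huC : u ∉ C := fun h => (Finset.mem_sdiff.1 (hCS h)).2 (hmem u)
      refine ⟨insert u C, ?_, ?_, ?_⟩
      · exact Finset.insert_subset hu (hCS.trans Finset.sdiff_subset)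
      · calc S.card ≤ (S \ B u).card + (B u).card := Finset.card_le_card_sdiff_add_card
          _ ≤ D * C.card + D := Nat.add_le_add hcard (hD u)
          _ = D * (C.card + 1) := by ring
          _ = D * (insert u C).card := by rw [Finset.card_insert_of_notMem huC]
      · intro a ha b hb hab
        rcases Finset.mem_insert.1 ha with rfl | ha' <;>
          rcases Finset.mem_insert.1 hb with rfl | hb'
        · rfl
        · exact absurd hab (fun h => (Finset.mem_sdiff.1 (hCS hb')).2 h)
        · exact absurd (hsym _ _ hab) (fun h => (Finset.mem_sdiff.1 (hCS ha')).2 h)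
        · exact hpair a ha' b hb' hab

open scoped Classical in
lemma conflict_card {m k ℓ : ℕ} (hk : 0 < k) (hm : 0 < m) (u : Fin m → Fin k) :
    ((univ : Finset (Fin m → Fin k)).filter
      (fun v => ∃ s : Fin ℓ → Fin k, IsSubseq s u ∧ IsSubseq s v)).card ≤
    m.choose ℓ * (m.choose ℓ * k ^ (m - ℓ)) := by
  classical
  set z : Fin k := ⟨0, hk⟩
  set W := (univ : Finset (Fin m → Fin k)).filter
      (fun v => ∃ s : Fin ℓ → Fin k, IsSubseq s u ∧ IsSubseq s v) with hW
  set T : Finset (Finset (Fin m) × Σ _ : Finset (Fin m), (Fin m → Fin k)) :=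
    (univ.powersetCard ℓ) ×ˢ ((univ.powersetCard ℓ).sigma
      (fun B => Fintype.piFinset (fun i => if i ∈ B then {z} else Finset.univ))) with hT
  have key : ∀ v : Fin m → Fin k, ∃ p : (Fin ℓ → Fin m) × (Fin ℓ → Fin m),
      v ∈ W → StrictMono p.1 ∧ StrictMono p.2 ∧ ∀ j, u (p.1 j) = v (p.2 j) := by
    intro v
    by_cases hv : v ∈ W
    · obtain ⟨s, ⟨f, hf, hfu⟩, ⟨g, hg, hgv⟩⟩ := (Finset.mem_filter.1 hv).2
      exact ⟨(f, g), fun _ => ⟨hf, hg, fun j => by rw [hfu j, hgv j]⟩⟩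
    · exact ⟨(fun _ => ⟨0, hm⟩, fun _ => ⟨0, hm⟩), fun h => absurd h hv⟩
  choose P hP using key
  have hcard : W.card ≤ T.card := by
    apply Finset.card_le_card_of_injOn
      (fun v => (Finset.image (P v).1 univ,
        ⟨Finset.image (P v).2 univ, fun i => if i ∈ Finset.image (P v).2 univ then z else v i⟩))
    · intro v hv
      obtain ⟨h1, h2, h3⟩ := hP v hv
      rw [hT, Finset.mem_coe, Finset.mem_product]
      constructor
      · rw [Finset.mem_powersetCard_univ, Finset.card_image_of_injective _ h1.injective,
          Finset.card_univ, Fintype.card_fin]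
      · rw [Finset.mem_sigma]
        refine ⟨?_, ?_⟩
        · rw [Finset.mem_powersetCard_univ, Finset.card_image_of_injective _ h2.injective,
            Finset.card_univ, Fintype.card_fin]
        · rw [Fintype.mem_piFinset]
          intro i
          by_cases hi : i ∈ Finset.image (P v).2 univ <;> simp [hi]
    · intro v hv w hw heq
      obtain ⟨hf1, hg1, huv⟩ := hP v hv
      obtain ⟨hf2, hg2, huw⟩ := hP w hw
      simp only [Prod.mk.injEq, Sigma.mk.inj_iff, heq_eq_eq] at heq
      obtain ⟨hA, hB, hfun⟩ := heq
      set A := Finset.image (P v).1 univ with hAdef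
      set B := Finset.image (P v).2 univ with hBdef
      have hAcard : A.card = ℓ := by
        rw [hAdef, Finset.card_image_of_injective _ hf1.injective, Finset.card_univ,
          Fintype.card_fin]
      have hBcard : B.card = ℓ := by
        rw [hBdef, Finset.card_image_of_injective _ hg1.injective, Finset.card_univ,
          Fintype.card_fin]
      have hfeq : (P v).1 = (P w).1 := by
        have e1 : (P v).1 = A.orderEmbOfFin hAcard :=
          Finset.orderEmbOfFin_unique hAcard
            (fun x => by rw [hAdef]; exact Finset.mem_image_of_mem _ (mem_univ x)) hf1
        have e2 : (P w).1 = A.orderEmbOfFin hAcard :=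
          Finset.orderEmbOfFin_unique hAcard
            (fun x => by rw [hA]; exact Finset.mem_image_of_mem _ (mem_univ x)) hf2
        rw [e1, e2]
      have hgeq : (P v).2 = (P w).2 := by
        have e1 : (P v).2 = B.orderEmbOfFin hBcard :=
          Finset.orderEmbOfFin_unique hBcard
            (fun x => by rw [hBdef]; exact Finset.mem_image_of_mem _ (mem_univ x)) hg1
        have e2 : (P w).2 = B.orderEmbOfFin hBcard :=
          Finset.orderEmbOfFin_unique hBcard
            (fun x => by rw [hB]; exact Finset.mem_image_of_mem _ (mem_univ x)) hg2
        rw [e1, e2]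
      funext i
      by_cases hi : i ∈ B
      · obtain ⟨j, _, hj⟩ := Finset.mem_image.1 hi
        rw [← hj, ← huv j, hgeq, hfeq]; exact huw j
      · have := congrFun hfun i
        rw [if_neg hi, if_neg (by rw [← hB]; exact hi)] at this
        exact this
  refine hcard.trans ?_
  rw [hT, Finset.card_product, Finset.card_sigma]
  have hpi : ∀ B ∈ univ.powersetCard ℓ,
      (Fintype.piFinset (fun i : Fin m => if i ∈ B then ({z} : Finset (Fin k)) else Finset.univ)).card
        = k ^ (m - ℓ) := by
    intro B hB
    rw [Fintype.card_piFinset]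
    have : ∀ i : Fin m, (if i ∈ B then ({z} : Finset (Fin k)) else Finset.univ).card
        = if i ∈ B then 1 else k := by
      intro i; split <;> simp
    rw [Finset.prod_congr rfl (fun i _ => this i), Finset.prod_ite, Finset.prod_const,
      Finset.prod_const, one_pow, one_mul]
    congr 1
    have : univ.filter (fun i => ¬ i ∈ B) = Bᶜ := by
      ext i; simp
    rw [this, Finset.card_compl, Fintype.card_fin,
      (Finset.mem_powersetCard_univ.1 hB)]
  rw [Finset.sum_congr rfl hpi, Finset.sum_const, Finset.card_powersetCard, Finset.card_univ,
    Fintype.card_fin, smul_eq_mul]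

lemma arith (δ γ : ℝ) (hδ0 : 0 < δ) (hδ1 : δ < 1) (hγ0 : 0 < γ) (hδγ : δ + γ < 1)
    (k : ℕ) (hk : (2 : ℝ) ^ (2 * binEnt δ / γ) ≤ k) (m : ℕ) :
    ((m.choose ⌈(1 - δ) * m⌉₊ : ℝ)) ^ 2 * (k : ℝ) ^ (((m - ⌈(1 - δ) * m⌉₊ : ℕ) : ℕ) : ℝ)
      ≤ (k : ℝ) ^ ((δ + γ) * m) := by
  set ℓ : ℕ := ⌈(1 - δ) * m⌉₊ with hℓ
  have hy0 : (0:ℝ) < 1 - δ := by linarith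
  have hγy : γ ≤ 1 - δ := by linarith
  have hℓm : ℓ ≤ m := by
    rw [hℓ, Nat.ceil_le]
    nlinarith [show (0:ℝ) ≤ (m:ℝ) from Nat.cast_nonneg m]
  set L : ℕ := m - ℓ with hL
  have hLcast : (L : ℝ) = (m : ℝ) - ℓ := by
    rw [hL]; push_cast [hℓm]; ring
  set φ : ℝ := (ℓ : ℝ) - (1 - δ) * m with hφ
  have hφ0 : 0 ≤ φ := by
    rw [hφ, sub_nonneg, hℓ]; exact Nat.le_ceil _
  set lx := Real.log δ with hlx
  set ly := Real.log (1 - δ) with hly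
  set lk := Real.log k with hlk
  have hlx0 : lx ≤ 0 := Real.log_nonpos hδ0.le hδ1.le
  have hly0 : ly ≤ 0 := Real.log_nonpos hy0.le (by linarith)
  have hk0 : (0:ℝ) < k := lt_of_lt_of_le (Real.rpow_pos_of_pos two_pos _) hk
  have hent : binEnt δ * Real.log 2 = -(δ * lx) - (1 - δ) * ly := by
    rw [binEnt, Real.logb, Real.logb, one_div, one_div, Real.log_inv, Real.log_inv]
    have h2 : Real.log 2 ≠ 0 := by positivity
    field_simp
    ring
  have hB : 2 * (-(δ * lx) - (1 - δ) * ly) ≤ γ * lk := by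
    have h1 : Real.log ((2:ℝ) ^ (2 * binEnt δ / γ)) ≤ lk := by
      rw [hlk]
      exact Real.log_le_log (Real.rpow_pos_of_pos two_pos _) hk
    rw [Real.log_rpow two_pos] at h1
    have h2 : γ * (2 * binEnt δ / γ * Real.log 2) = 2 * (binEnt δ * Real.log 2) := by
      field_simp
    nlinarith [mul_le_mul_of_nonneg_left h1 hγ0.le]
  have hlk0 : 0 ≤ lk := by
    rw [hlk]
    apply Real.log_nonneg
    calc (1:ℝ) = 2 ^ (0:ℝ) := by rw [Real.rpow_zero]
      _ ≤ 2 ^ (2 * binEnt δ / γ) := by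
          apply Real.rpow_le_rpow_of_exponent_le one_le_two
          have h1 : 0 ≤ binEnt δ * Real.log 2 := by nlinarith
          have h2 : 0 < Real.log 2 := Real.log_pos one_lt_two
          have h3 : 0 ≤ binEnt δ := by by_contra hneg; push_neg at hneg; nlinarith
          positivity
      _ ≤ k := hk
  have hC : 2 * lx - 2 * ly ≤ lk := by
    rcases le_or_gt lx ly with h | h
    · linarith
    · have h1 : γ * (2 * (lx - ly)) ≤ γ * lk := by
        have h2 : γ * (lx - ly) ≤ (1 - δ) * (lx - ly) :=
          mul_le_mul_of_nonneg_right hγy (by linarith)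
        nlinarith
      have := le_of_mul_le_mul_left h1 hγ0
      linarith
  have key1 : (m.choose ℓ : ℝ) * (δ ^ L * (1 - δ) ^ ℓ) ≤ 1 := by
    have h1 : ((δ + (1 - δ)) : ℝ) ^ m
        = ∑ i ∈ Finset.range (m + 1), δ ^ i * (1 - δ) ^ (m - i) * (m.choose i) :=
      add_pow δ (1 - δ) m
    have h2 : δ ^ L * (1 - δ) ^ (m - L) * ((m.choose L : ℕ) : ℝ)
        ≤ ∑ i ∈ Finset.range (m + 1), δ ^ i * (1 - δ) ^ (m - i) * (m.choose i) := by
      apply Finset.single_le_sum (f := fun i => δ ^ i * (1 - δ) ^ (m - i) * ((m.choose i : ℕ) : ℝ))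
      · intro i _; positivity
      · rw [Finset.mem_range]; omega
    rw [hL, Nat.sub_sub_self hℓm, Nat.choose_symm hℓm] at h2
    have h3 : ((δ + (1 - δ)) : ℝ) ^ m = 1 := by norm_num
    rw [hL] at *
    nlinarith
  have hc0 : (0:ℝ) < (m.choose ℓ : ℝ) := by
    exact_mod_cast Nat.choose_pos hℓm
  have hA : Real.log (m.choose ℓ : ℝ) + (L : ℝ) * lx + (ℓ : ℝ) * ly ≤ 0 := by
    have h1 : Real.log ((m.choose ℓ : ℝ) * (δ ^ L * (1 - δ) ^ ℓ)) ≤ Real.log 1 :=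
      Real.log_le_log (by positivity) key1
    rw [Real.log_one, Real.log_mul (by positivity) (by positivity),
      Real.log_mul (by positivity) (by positivity), Real.log_pow, Real.log_pow] at h1
    rw [hlx, hly]
    linarith
  have hgoal_pos1 : (0:ℝ) < ((m.choose ℓ : ℝ)) ^ 2 * (k : ℝ) ^ ((L : ℕ) : ℝ) := by
    have := Real.rpow_pos_of_pos hk0 ((L : ℕ) : ℝ)
    positivity
  rw [← Real.log_le_log_iff hgoal_pos1 (Real.rpow_pos_of_pos hk0 _)]
  rw [Real.log_mul (by positivity) (Real.rpow_pos_of_pos hk0 _).ne',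
    Real.log_pow, Real.log_rpow hk0, Real.log_rpow hk0]
  have hBm : (m : ℝ) * (2 * (-(δ * lx) - (1 - δ) * ly)) ≤ (m : ℝ) * (γ * lk) :=
    mul_le_mul_of_nonneg_left hB (Nat.cast_nonneg m)
  have hCφ : φ * (2 * lx - 2 * ly) ≤ φ * lk := mul_le_mul_of_nonneg_left hC hφ0
  have hℓcast : (ℓ : ℝ) = (1 - δ) * m + φ := by rw [hφ]; ring
  have hLφ : (L : ℝ) = δ * m - φ := by rw [hLcast, hℓcast]; ring
  rw [hLφ] at hA ⊢
  rw [hℓcast] at hA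
  rw [← hlk]
  push_cast
  linarith [hA, hBm, hCφ]

/-- Let `δ, γ ∈ (0,1)` with `δ + γ < 1`, and let `k ≥ 2^{2h(δ)/γ}`. Then for every `m ≥ 1`
there exists a code `C ⊆ [k]^m` with `|C| ≥ k^{(1-δ-γ)m}` such that every string over
`[k]` of length `⌈(1-δ)m⌉` is a subsequence of at most one codeword of `C` (equivalently,
every two distinct codewords have LCS of length less than `(1-δ)m`). -/
theorem greedy_deletion_codes (δ γ : ℝ) (hδ0 : 0 < δ) (hδ1 : δ < 1) (hγ0 : 0 < γ)
    (hγ1 : γ < 1) (hδγ : δ + γ < 1)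
    (k : ℕ) (hk : (2 : ℝ) ^ (2 * binEnt δ / γ) ≤ k) (m : ℕ) (hm : 0 < m) :
    ∃ C : Finset (Fin m → Fin k),
      (k : ℝ) ^ ((1 - δ - γ) * m) ≤ C.card ∧
      ∀ s : Fin (⌈(1 - δ) * m⌉₊) → Fin k, ∀ u ∈ C, ∀ v ∈ C,
        IsSubseq s u → IsSubseq s v → u = v := by
  classical
  have hk0r : (0:ℝ) < k := lt_of_lt_of_le (Real.rpow_pos_of_pos two_pos _) hk
  have hk0 : 0 < k := by exact_mod_cast hk0r
  set ℓ : ℕ := ⌈(1 - δ) * m⌉₊ with hℓ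
  have hℓm : ℓ ≤ m := by
    rw [hℓ, Nat.ceil_le]
    nlinarith [show (0:ℝ) ≤ (m:ℝ) from Nat.cast_nonneg m]
  set Bset : (Fin m → Fin k) → Finset (Fin m → Fin k) := fun u =>
    Finset.univ.filter (fun v => ∃ s : Fin ℓ → Fin k, IsSubseq s u ∧ IsSubseq s v) with hBset
  have hsym : ∀ u v, u ∈ Bset v → v ∈ Bset u := by
    intro u v h
    obtain ⟨s, h1, h2⟩ := (Finset.mem_filter.1 h).2
    exact Finset.mem_filter.2 ⟨Finset.mem_univ _, s, h2, h1⟩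
  have hmem : ∀ u, u ∈ Bset u := by
    intro u
    refine Finset.mem_filter.2 ⟨Finset.mem_univ _, fun j => u (Fin.castLE hℓm j),
      ⟨Fin.castLE hℓm, Fin.strictMono_castLE hℓm, fun j => rfl⟩,
      ⟨Fin.castLE hℓm, Fin.strictMono_castLE hℓm, fun j => rfl⟩⟩
  have hD : ∀ u, (Bset u).card ≤ m.choose ℓ * (m.choose ℓ * k ^ (m - ℓ)) := by
    intro u
    have := conflict_card (ℓ := ℓ) hk0 hm u
    convert this using 2
  obtain ⟨C, _, hcard, hpair⟩ := greedy_aux Bset hsym hmem hD Finset.univ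
  refine ⟨C, ?_, ?_⟩
  · -- cardinality bound
    set c : ℕ := m.choose ℓ with hc
    set D : ℕ := c * (c * k ^ (m - ℓ)) with hDdef
    have hcm : (Finset.univ : Finset (Fin m → Fin k)).card = k ^ m := by
      simp [Finset.card_univ]
    rw [hcm] at hcard
    have hDpos : (0:ℝ) < D := by
      have : 0 < D := by
        rw [hDdef]
        have := Nat.choose_pos hℓm
        positivity
      exact_mod_cast this
    have h1 : ((k:ℝ)) ^ (m:ℕ) ≤ (D:ℝ) * C.card := by exact_mod_cast hcard
    have h2 := arith δ γ hδ0 hδ1 hγ0 hδγ k hk m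
    have hDr : (D:ℝ) = ((c:ℝ)) ^ 2 * (k : ℝ) ^ (((m - ℓ : ℕ) : ℕ) : ℝ) := by
      rw [Real.rpow_natCast, hDdef]
      push_cast
      ring
    have key : (k:ℝ) ^ ((1 - δ - γ) * m) * D ≤ (k:ℝ) ^ (m:ℕ) := by
      rw [hDr]
      calc (k:ℝ) ^ ((1 - δ - γ) * m) * (((c:ℝ)) ^ 2 * (k : ℝ) ^ (((m - ℓ : ℕ) : ℕ) : ℝ))
          ≤ (k:ℝ) ^ ((1 - δ - γ) * m) * ((k:ℝ) ^ ((δ + γ) * m)) :=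
            mul_le_mul_of_nonneg_left h2 (Real.rpow_nonneg hk0r.le _)
        _ = (k:ℝ) ^ ((1 - δ - γ) * m + (δ + γ) * m) := (Real.rpow_add hk0r _ _).symm
        _ = (k:ℝ) ^ ((m:ℝ)) := by congr 1; ring
        _ = (k:ℝ) ^ (m:ℕ) := Real.rpow_natCast _ _
    have := key.trans (h1.trans_eq (mul_comm _ _))
    exact le_of_mul_le_mul_right this hDpos
  · intro s u hu v hv hsu hsv
    exact hpair u hu v hv (Finset.mem_filter.2 ⟨Finset.mem_univ _, s, hsu, hsv⟩)
end

section
/- There exists an absolute constant c > 0 such that the following holds. Let δ ∈ (0,1/2) and β ∈ (0,1), and let m be a positive integer with δm a positive integer. If 1 − m·2^{−c·βm} > 0, then there exists a code C ⊆ {0,1}^m consisting only of β-dense strings, with |C| ≥ (1 − m·2^{−c·βm})·2^{(1−2h(δ))m}/(2δm), such that every two distinct codewords of C have longest common subsequence of length less than (1−δ)m, i.e., C can be corrected from a δ fraction of worst-case deletions. (Proposition 2.6 of the paper.) -/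
open Finset Real
open scoped Classical


lemma isSubseq_sublist {ℓ m : ℕ} {s : Fin ℓ → Fin 2} {t : Fin m → Fin 2} (h : IsSubseq s t) :
    (List.ofFn s).Sublist (List.ofFn t) := by
  obtain ⟨f, hf, hft⟩ := h
  rw [List.sublist_iff_exists_fin_orderEmbedding_get_eq]
  refine ⟨OrderEmbedding.ofStrictMono
    (fun i => Fin.cast (List.length_ofFn (f := t)).symm (f (Fin.cast (List.length_ofFn (f := s)) i))) ?_, ?_⟩
  · intro i j hij
    simp only [Fin.lt_def, Fin.coe_cast]
    exact hf (show Fin.cast (List.length_ofFn (f := s)) i < Fin.cast (List.length_ofFn (f := s)) j from hij)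
  · intro i
    simp [List.get_ofFn, OrderEmbedding.ofStrictMono]
    rw [← hft]
    congr 1

lemma subseq_count {m : ℕ} (ℓ : ℕ) (u : Fin m → Fin 2) :
    ((univ : Finset (Fin ℓ → Fin 2)).filter (fun s => IsSubseq s u)).card ≤ m.choose ℓ := by
  have := Finset.card_le_card_of_injOn
    (f := fun s : Fin ℓ → Fin 2 => if h : IsSubseq s u then
        Finset.image (Classical.choose h) univ else ∅)
    (s := (univ : Finset (Fin ℓ → Fin 2)).filter (fun s => IsSubseq s u))
    (t := Finset.powersetCard ℓ (univ : Finset (Fin m)))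
    ?_ ?_
  · rw [Finset.card_powersetCard, card_univ, Fintype.card_fin] at this
    exact this
  · intro s hs
    rw [mem_coe, mem_filter] at hs
    obtain ⟨-, h⟩ := hs
    dsimp only
    rw [dif_pos h, mem_coe, Finset.mem_powersetCard]
    refine ⟨subset_univ _, ?_⟩
    rw [Finset.card_image_of_injective _ (Classical.choose_spec h).1.injective, card_univ,
      Fintype.card_fin]
  · intro s₁ hs₁ s₂ hs₂ heq
    rw [mem_coe, mem_filter] at hs₁ hs₂
    obtain ⟨-, h₁⟩ := hs₁
    obtain ⟨-, h₂⟩ := hs₂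
    dsimp only at heq
    rw [dif_pos h₁, dif_pos h₂] at heq
    set A := Finset.image (Classical.choose h₁) univ with hA
    have hcard : A.card = ℓ := by
      rw [hA, Finset.card_image_of_injective _ (Classical.choose_spec h₁).1.injective, card_univ,
        Fintype.card_fin]
    have e₁ : Classical.choose h₁ = A.orderEmbOfFin hcard :=
      Finset.orderEmbOfFin_unique hcard (fun x => mem_image_of_mem _ (mem_univ x))
        (Classical.choose_spec h₁).1
    have e₂ : Classical.choose h₂ = A.orderEmbOfFin hcard :=
      Finset.orderEmbOfFin_unique hcard
        (fun x => heq ▸ mem_image_of_mem _ (mem_univ x)) (Classical.choose_spec h₂).1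
    funext j
    rw [← (Classical.choose_spec h₁).2 j, ← (Classical.choose_spec h₂).2 j, e₁, e₂]

lemma sum_choose_theta (m d : ℕ) (θ : ℝ) (h0 : 0 < θ) (h1 : θ ≤ 1) (hdm : d ≤ m) :
    (∑ i ∈ range (d+1), (m.choose i : ℝ)) * θ ^ d ≤ (1 + θ) ^ m := by
  rw [sum_mul]
  calc ∑ i ∈ range (d+1), (m.choose i : ℝ) * θ ^ d
      ≤ ∑ i ∈ range (d+1), (m.choose i : ℝ) * θ ^ i := by
        apply sum_le_sum
        intro i hi
        exact mul_le_mul_of_nonneg_left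
          (pow_le_pow_of_le_one h0.le h1 (by simp at hi; omega)) (by positivity)
    _ ≤ ∑ i ∈ range (m+1), (m.choose i : ℝ) * θ ^ i := by
        apply sum_le_sum_of_subset_of_nonneg
        · exact range_subset_range.mpr (by omega)
        · intro i _ _; positivity
    _ = (1 + θ) ^ m := by
        rw [add_comm 1 θ, add_pow]
        apply Finset.sum_congr rfl
        intro i hi
        rw [one_pow]
        ring

lemma greedy_lemma {V : Type*} [Fintype V] [DecidableEq V] (R : V → V → Prop)
    [DecidableRel R] (hsym : ∀ u v, R u v → R v u) (hrefl : ∀ v, R v v) (B : ℝ)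
    (hB : ∀ u : V, (((univ : Finset V).filter (R u)).card : ℝ) ≤ B) :
    ∀ n (D : Finset V), D.card ≤ n →
      ∃ C ⊆ D, (D.card : ℝ) / B ≤ C.card ∧ ∀ u ∈ C, ∀ v ∈ C, u ≠ v → ¬ R u v := by
  intro n
  induction n with
  | zero =>
    intro D hD
    refine ⟨∅, empty_subset _, ?_, by simp⟩
    simp [card_eq_zero.mp (Nat.le_zero.mp hD)]
  | succ n ih =>
    intro D hD
    rcases eq_or_ne D ∅ with rfl | hne
    · exact ⟨∅, empty_subset _, by simp, by simp⟩
    obtain ⟨u, hu⟩ := nonempty_iff_ne_empty.mpr hne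
    have hBpos : 0 < B := by
      refine lt_of_lt_of_le ?_ (hB u)
      have : u ∈ (univ : Finset V).filter (R u) := mem_filter.mpr ⟨mem_univ u, hrefl u⟩
      have := card_pos.mpr ⟨u, this⟩
      exact_mod_cast this
    set D' := D \ ((univ : Finset V).filter (R u)) with hD'
    have huD' : u ∉ D' := by
      simp [hD', hrefl u]
    have hD'card : D'.card ≤ n := by
      have hss : D' ⊂ D := (ssubset_iff_of_subset sdiff_subset).mpr ⟨u, hu, huD'⟩
      have := card_lt_card hss
      omega
    obtain ⟨C', hC'sub, hC'card, hC'pair⟩ := ih D' hD'card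
    have huC' : u ∉ C' := fun h => huD' (hC'sub h)
    refine ⟨insert u C', ?_, ?_, ?_⟩
    · intro x hx
      rcases mem_insert.mp hx with rfl | hx
      · exact hu
      · exact sdiff_subset (hC'sub hx)
    · rw [card_insert_of_notMem huC']
      have hcards : (D.card : ℝ) ≤ D'.card + B := by
        have h1 : D.card ≤ D'.card + ((univ : Finset V).filter (R u)).card :=
          card_le_card_sdiff_add_card
        calc (D.card : ℝ) ≤ (D'.card : ℝ) + (((univ : Finset V).filter (R u)).card : ℝ) := by
              exact_mod_cast h1
          _ ≤ D'.card + B := by linarith [hB u]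
      rw [div_le_iff₀ hBpos] at hC'card ⊢
      push_cast
      calc (D.card : ℝ) ≤ D'.card + B := hcards
        _ ≤ C'.card * B + B := by linarith
        _ = (C'.card + 1) * B := by ring
    · intro x hx y hy hxy
      rcases mem_insert.mp hx with rfl | hx' <;> rcases mem_insert.mp hy with rfl | hy'
      · exact absurd rfl hxy
      · intro hR
        have : y ∉ (univ : Finset V).filter (R x) := by
          have := hC'sub hy'
          simp only [hD', mem_sdiff] at this
          exact this.2
        exact this (mem_filter.mpr ⟨mem_univ y, hR⟩)
      · intro hR
        have : x ∉ (univ : Finset V).filter (R y) := by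
          have := hC'sub hx'
          simp only [hD', mem_sdiff] at this
          exact this.2
        exact this (mem_filter.mpr ⟨mem_univ x, hsym x y hR⟩)
      · exact hC'pair x hx' y hy' hxy

/-- number of supersequences of `s` of length `m` -/
noncomputable def sCount (m : ℕ) (s : List (Fin 2)) : ℕ :=
  Fintype.card {t : Fin m → Fin 2 // s.Sublist (List.ofFn t)}

lemma fin2_eq {x y a : Fin 2} (hx : x ≠ a) (hy : y ≠ a) : x = y := by
  revert hx hy; revert x y a; decide

lemma cons_sublist_of_ne {α : Type*} {a b : α} {s t : List α} (h : a ≠ b) :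
    (a :: s).Sublist (b :: t) → (a :: s).Sublist t := by
  intro hs
  cases hs with
  | cons _ h2 => exact h2
  | cons_cons _ h2 => exact absurd rfl h

lemma sCount_succ_le (m : ℕ) (a : Fin 2) (s' : List (Fin 2)) :
    sCount (m+1) (a :: s') ≤ sCount m s' + sCount m (a :: s') := by
  have key : ∀ t : Fin (m+1) → Fin 2, List.ofFn t = t 0 :: List.ofFn (t ∘ Fin.succ) := by
    intro t; rw [List.ofFn_succ]; rfl
  classical
  have : Fintype.card {t : Fin (m+1) → Fin 2 // (a :: s').Sublist (List.ofFn t)} ≤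
      Fintype.card ({g : Fin m → Fin 2 // s'.Sublist (List.ofFn g)} ⊕
        {g : Fin m → Fin 2 // (a :: s').Sublist (List.ofFn g)}) := by
    apply Fintype.card_le_of_injective
      (fun t => if h : t.1 0 = a then
          Sum.inl ⟨t.1 ∘ Fin.succ, by
            have := t.2; rw [key t.1, h] at this
            exact (List.cons_sublist_cons).mp this⟩
        else
          Sum.inr ⟨t.1 ∘ Fin.succ, by
            have ht := t.2; rw [key t.1] at ht
            exact cons_sublist_of_ne (fun e => h e.symm) ht⟩)
    intro x y hxy
    by_cases hx : x.1 0 = a <;> by_cases hy : y.1 0 = a <;>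
      simp only [hx, hy, dif_pos, dif_neg, not_false_iff] at hxy
    · apply Subtype.ext; funext i
      cases i using Fin.cases with
      | zero => rw [hx, hy]
      | succ j => exact congrFun (congrArg Subtype.val (Sum.inl.inj hxy)) j
    · exact absurd hxy (by simp)
    · exact absurd hxy (by simp)
    · apply Subtype.ext; funext i
      cases i using Fin.cases with
      | zero => exact fin2_eq hx hy
      | succ j => exact congrFun (congrArg Subtype.val (Sum.inr.inj hxy)) j
  simpa [sCount, Fintype.card_sum] using this

lemma sCount_eq_zero {m : ℕ} {s : List (Fin 2)} (h : m < s.length) : sCount m s = 0 := by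
  rw [sCount, Fintype.card_eq_zero_iff]
  constructor; rintro ⟨t, ht⟩
  have := ht.length_le
  simp only [List.length_ofFn] at this
  omega

lemma sCount_le_pow (m : ℕ) (s : List (Fin 2)) : sCount m s ≤ 2 ^ m := by
  calc sCount m s ≤ Fintype.card (Fin m → Fin 2) := Fintype.card_subtype_le _
  _ = 2 ^ m := by simp

lemma pascal_sum (m k : ℕ) : ∑ i ∈ range (k+1), (m+1).choose i
    = ∑ i ∈ range (k+1), m.choose i + ∑ i ∈ range k, m.choose i := by
  induction k with
  | zero => simp
  | succ k ih =>
    rw [sum_range_succ, ih, Nat.choose_succ_succ,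
      sum_range_succ (f := m.choose) (n := k+1), sum_range_succ (f := m.choose) (n := k)]
    ring

lemma sCount_le_sum (m : ℕ) : ∀ s : List (Fin 2), s.length ≤ m →
    sCount m s ≤ ∑ i ∈ range (m - s.length + 1), m.choose i := by
  induction m with
  | zero =>
    intro s hs
    rw [List.length_eq_zero_iff.mp (Nat.le_zero.mp hs)]
    simpa using sCount_le_pow 0 []
  | succ m ih =>
    intro s hs
    cases s with
    | nil => simpa [Nat.sum_range_choose] using sCount_le_pow (m+1) []
    | cons a s' =>
      simp only [List.length_cons] at hs ⊢
      have hk : m + 1 - (s'.length + 1) = m - s'.length := by omega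
      rw [hk, pascal_sum m (m - s'.length)]
      have h1 : sCount m s' ≤ ∑ i ∈ range (m - s'.length + 1), m.choose i :=
        ih s' (by omega)
      have h2 : sCount m (a :: s') ≤ ∑ i ∈ range (m - s'.length), m.choose i := by
        by_cases hle : s'.length + 1 ≤ m
        · have h3 := ih (a :: s') (by simpa using hle)
          simp only [List.length_cons] at h3
          have h4 : m - (s'.length + 1) + 1 = m - s'.length := by omega
          rwa [h4] at h3
        · have h0 : sCount m (a :: s') = 0 :=
            sCount_eq_zero (by simp only [List.length_cons]; omega)
          rw [h0]; exact Nat.zero_le _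
      calc sCount (m+1) (a :: s') ≤ sCount m s' + sCount m (a :: s') := sCount_succ_le m a s'
      _ ≤ _ := Nat.add_le_add h1 h2

/-- A string `s ∈ {0,1}^m` is `β`-dense if every interval of `⌈βm⌉` consecutive positions
of `s` contains at least `βm/10` ones. -/
def BetaDense (β : ℝ) {m : ℕ} (s : Fin m → Fin 2) : Prop :=
  ∀ start : ℕ, start + ⌈β * m⌉₊ ≤ m →
    β * m / 10 ≤
      ({j : Fin m | start ≤ (j : ℕ) ∧ (j : ℕ) < start + ⌈β * m⌉₊ ∧ s j = 1}.ncard : ℝ)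

lemma numeric_ineq (x : ℝ) (hx : 0 ≤ x) :
    (8 : ℝ) ^ (x / 10) * (9 / 16 : ℝ) ^ x ≤ (2 : ℝ) ^ (-(x / 2)) := by
  have h8 : (8 : ℝ) ^ (x / 10) = ((8 : ℝ) ^ ((1 : ℝ) / 10)) ^ x := by
    rw [← Real.rpow_mul (by norm_num)]; congr 1; ring
  have h9 : (9 / 16 : ℝ) ^ x = ((9 / 16 : ℝ) ^ ((1 : ℝ))) ^ x := by norm_num
  have h2 : (2 : ℝ) ^ (-(x / 2)) = ((2 : ℝ) ^ (-(1 : ℝ) / 2)) ^ x := by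
    rw [← Real.rpow_mul (by norm_num)]; ring_nf
  rw [h8, h2, ← Real.mul_rpow (by positivity) (by positivity)]
  apply Real.rpow_le_rpow (by positivity) ?_ hx
  -- key numeric fact: 8^(1/10) * (9/16) ≤ 2^(-1/2)
  have hbpos : (0 : ℝ) ≤ (2 : ℝ) ^ (-(1 : ℝ) / 2) := Real.rpow_nonneg (by norm_num) _
  apply le_of_pow_le_pow_left₀ (n := 10) (by norm_num) hbpos
  have e1 : ((8 : ℝ) ^ ((1 : ℝ) / 10)) ^ (10 : ℕ) = 8 := by
    rw [← Real.rpow_natCast (_ ^ _), ← Real.rpow_mul (by norm_num)]; norm_num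
  have e2 : ((2 : ℝ) ^ (-(1 : ℝ) / 2)) ^ (10 : ℕ) = (2 : ℝ)^(-(5:ℝ)) := by
    rw [← Real.rpow_natCast (_ ^ _), ← Real.rpow_mul (by norm_num)]; norm_num
  rw [mul_pow, e1, e2]
  have e3 : (2 : ℝ) ^ (-(5:ℝ)) = 1 / 32 := by
    rw [show (-(5:ℝ)) = -((5:ℕ):ℝ) by norm_num, Real.rpow_neg (by norm_num),
      Real.rpow_natCast]
    norm_num
  rw [e3]
  norm_num

lemma window_card (m L start : ℕ) (h : start + L ≤ m) :
    ((univ : Finset (Fin m)).filter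
      (fun (j : Fin m) => start ≤ (j : ℕ) ∧ (j : ℕ) < start + L)).card = L := by
  rw [Finset.card_filter]
  rw [Fin.sum_univ_eq_sum_range (fun v => if start ≤ v ∧ v < start + L then 1 else 0)]
  rw [← Finset.card_filter]
  have h2 : (Finset.range m).filter (fun v => start ≤ v ∧ v < start + L)
      = Finset.Ico start (start + L) := by
    ext v
    simp only [Finset.mem_filter, Finset.mem_range, Finset.mem_Ico]
    omega
  rw [h2, Nat.card_Ico]
  omega

/-- Count of ones of `s` in window `[start, start+L)`. -/
noncomputable def wCount {m : ℕ} (L start : ℕ) (s : Fin m → Fin 2) : ℕ :=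
  ((univ : Finset (Fin m)).filter
    (fun (j : Fin m) => start ≤ (j : ℕ) ∧ (j : ℕ) < start + L ∧ s j = 1)).card

lemma window_bound (β : ℝ) (hβ0 : 0 < β) (m : ℕ) (start : ℕ)
    (hsL : start + ⌈β * m⌉₊ ≤ m) :
    ((((univ : Finset (Fin m → Fin 2))).filter
        (fun (s : Fin m → Fin 2) => ((wCount ⌈β * m⌉₊ start s : ℝ) < β * m / 10))).card : ℝ)
      ≤ (2 : ℝ) ^ m * (2 : ℝ) ^ (-(β * m / 2)) := by
  set L := ⌈β * m⌉₊ with hL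
  set F := (((univ : Finset (Fin m → Fin 2))).filter
        (fun (s : Fin m → Fin 2) => ((wCount L start s : ℝ) < β * m / 10))) with hF
  set f : Fin m → Fin 2 → ℝ :=
    fun j b => if start ≤ (j : ℕ) ∧ (j : ℕ) < start + L ∧ b = 1 then (1/8 : ℝ) else 1 with hf
  have claimA : ∀ s : Fin m → Fin 2, ∏ j, f j (s j) = (1/8 : ℝ) ^ (wCount L start s) := by
    intro s
    simp only [wCount]
    rw [← Finset.prod_const, Finset.prod_filter]
  have claimB : ∑ s : Fin m → Fin 2, ∏ j, f j (s j) = ∏ j, (∑ b : Fin 2, f j b) := by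
    rw [Finset.prod_univ_sum]
    simp
  have claimC : ∀ j : Fin m, (∑ b : Fin 2, f j b)
      = if start ≤ (j : ℕ) ∧ (j : ℕ) < start + L then (9/8 : ℝ) else 2 := by
    intro j
    rw [Fin.sum_univ_two]
    by_cases hj : start ≤ (j : ℕ) ∧ (j : ℕ) < start + L
    · rw [if_pos hj, hf]
      norm_num [hj.1, hj.2]
    · rw [if_neg hj, hf]
      simp only []
      rw [if_neg (by tauto), if_neg (by tauto)]
      norm_num
  have hLm : L ≤ m := by omega
  have claimD : ∏ j : Fin m, (∑ b : Fin 2, f j b) = (9/8 : ℝ) ^ L * 2 ^ (m - L) := by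
    rw [Finset.prod_congr rfl (fun j _ => claimC j), Finset.prod_ite,
      Finset.prod_const, Finset.prod_const, window_card m L start hsL]
    congr 2
    have := Finset.card_filter_add_card_filter_not
      (s := (univ : Finset (Fin m))) (p := fun j => start ≤ (j : ℕ) ∧ (j : ℕ) < start + L)
    rw [window_card m L start hsL] at this
    simp only [card_univ, Fintype.card_fin] at this
    omega
  -- main chain
  have hpos : (0:ℝ) < ((1:ℝ)/8) ^ (β * m / 10) := Real.rpow_pos_of_pos (by norm_num) _
  have step1 : (F.card : ℝ) * ((1:ℝ)/8) ^ (β * m / 10) ≤ (9/8 : ℝ) ^ L * 2 ^ (m - L) := by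
    have e1 : (F.card : ℝ) * ((1:ℝ)/8) ^ (β * m / 10)
        = ∑ _s ∈ F, ((1:ℝ)/8) ^ (β * m / 10) := by
      rw [Finset.sum_const, nsmul_eq_mul]
    rw [e1, ← claimD, ← claimB]
    have h2 : ∑ s ∈ F, ((1:ℝ)/8) ^ (β * m / 10) ≤ ∑ s ∈ F, ∏ j, f j (s j) := by
      apply Finset.sum_le_sum
      intro s hs
      rw [claimA s]
      rw [hF, mem_filter] at hs
      have hcount : ((wCount L start s : ℝ)) ≤ β * m / 10 := hs.2.le
      calc ((1:ℝ)/8) ^ (β * m / 10) ≤ ((1:ℝ)/8) ^ ((wCount L start s : ℝ)) :=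
            Real.rpow_le_rpow_of_exponent_ge (by norm_num) (by norm_num) hcount
        _ = ((1:ℝ)/8) ^ (wCount L start s) := Real.rpow_natCast _ _
    refine h2.trans (Finset.sum_le_sum_of_subset_of_nonneg (Finset.filter_subset _ _) ?_)
    intro s _ _
    rw [claimA s]
    positivity
  have step2 : (F.card : ℝ) ≤ (9/8 : ℝ) ^ L * 2 ^ (m - L) * (8:ℝ) ^ (β * m / 10) := by
    have h18 : ((1:ℝ)/8) ^ (β * m / 10) = ((8:ℝ) ^ (β * m / 10))⁻¹ := by
      rw [one_div, Real.inv_rpow (by norm_num)]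
    rw [← le_div_iff₀ hpos] at step1
    rwa [h18, div_eq_mul_inv, inv_inv] at step1
  have step3 : (9/8 : ℝ) ^ L * 2 ^ (m - L) = (2:ℝ) ^ m * (9/16 : ℝ) ^ L := by
    have : (2:ℝ) ^ (m - L) = 2 ^ m / 2 ^ L := by
      rw [eq_div_iff (by positivity), ← pow_add]
      congr 1
      omega
    rw [this, ← mul_div_assoc, mul_comm, mul_div_assoc, ← div_pow]
    norm_num
  have step4 : (9/16 : ℝ) ^ L ≤ (9/16 : ℝ) ^ (β * (m:ℝ)) := by
    rw [← Real.rpow_natCast (9/16 : ℝ) L]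
    apply Real.rpow_le_rpow_of_exponent_ge (by norm_num) (by norm_num)
    exact Nat.le_ceil _
  calc (F.card : ℝ) ≤ (9/8 : ℝ) ^ L * 2 ^ (m - L) * (8:ℝ) ^ (β * m / 10) := step2
    _ = (2:ℝ) ^ m * ((9/16 : ℝ) ^ L * (8:ℝ) ^ (β * m / 10)) := by rw [step3]; ring
    _ ≤ (2:ℝ) ^ m * ((9/16 : ℝ) ^ (β * (m:ℝ)) * (8:ℝ) ^ (β * m / 10)) := by
        apply mul_le_mul_of_nonneg_left ?_ (by positivity)
        apply mul_le_mul_of_nonneg_right step4 (Real.rpow_nonneg (by norm_num) _)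
    _ ≤ (2:ℝ) ^ m * (2:ℝ) ^ (-(β * m / 2)) := by
        apply mul_le_mul_of_nonneg_left ?_ (by positivity)
        have := numeric_ineq (β * m) (by positivity)
        rw [show β * (m:ℝ) / 10 = (β * m) / 10 by ring] at this
        linarith [this]

lemma dense_count (β : ℝ) (hβ0 : 0 < β) (m : ℕ) (hm : 0 < m) :
    (1 - (m:ℝ) * (2 : ℝ) ^ (-(1/2 * β * m))) * 2 ^ m
      ≤ (((univ : Finset (Fin m → Fin 2)).filter (fun (s : Fin m → Fin 2) => BetaDense β s)).card : ℝ) := by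
  set L := ⌈β * m⌉₊ with hL
  have hβm : (0:ℝ) < β * m := by positivity
  have hL1 : 1 ≤ L := Nat.one_le_iff_ne_zero.mpr (by
    simp only [hL, ne_eq, Nat.ceil_eq_zero, not_le]
    exact hβm)
  set Bad := (univ : Finset (Fin m → Fin 2)).filter (fun (s : Fin m → Fin 2) => ¬ BetaDense β s) with hBad
  have hsplit : ((univ : Finset (Fin m → Fin 2)).filter (fun (s : Fin m → Fin 2) => BetaDense β s)).card
      + Bad.card = 2 ^ m := by
    rw [hBad, Finset.card_filter_add_card_filter_not]
    simp [Fintype.card_fun]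
  -- Bad is covered by the union over valid starts
  have hcover : Bad ⊆ ((range m).filter (fun start => start + L ≤ m)).biUnion
      (fun start => (univ : Finset (Fin m → Fin 2)).filter
        (fun (s : Fin m → Fin 2) => ((wCount L start s : ℝ) < β * m / 10))) := by
    intro s hs
    rw [hBad, mem_filter] at hs
    rw [BetaDense] at hs
    push_neg at hs
    obtain ⟨start, hstart, hlt⟩ := hs.2
    rw [Finset.mem_biUnion]
    refine ⟨start, ?_, ?_⟩
    · rw [mem_filter, Finset.mem_range]
      exact ⟨by omega, hstart⟩
    · rw [mem_filter]
      refine ⟨mem_univ _, ?_⟩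
      have hn : ({j : Fin m | start ≤ (j : ℕ) ∧ (j : ℕ) < start + L ∧ s j = 1}.ncard)
          = wCount L start s := by
        have hset : {j : Fin m | start ≤ (j : ℕ) ∧ (j : ℕ) < start + L ∧ s j = 1}
            = ↑((univ : Finset (Fin m)).filter
              (fun (j : Fin m) => start ≤ (j : ℕ) ∧ (j : ℕ) < start + L ∧ s j = 1)) := by
          ext j
          simp
        rw [wCount, hset, Set.ncard_coe_finset]
      rwa [hn] at hlt
  have hbadcard : (Bad.card : ℝ) ≤ (m:ℝ) * ((2:ℝ) ^ m * (2:ℝ) ^ (-(β * m / 2))) := by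
    calc (Bad.card : ℝ)
        ≤ ((((range m).filter (fun start => start + L ≤ m)).biUnion
            (fun start => (univ : Finset (Fin m → Fin 2)).filter
              (fun (s : Fin m → Fin 2) => ((wCount L start s : ℝ) < β * m / 10)))).card : ℝ) := by
          exact_mod_cast Finset.card_le_card hcover
      _ ≤ ∑ start ∈ (range m).filter (fun start => start + L ≤ m),
            (((univ : Finset (Fin m → Fin 2)).filter
              (fun (s : Fin m → Fin 2) => ((wCount L start s : ℝ) < β * m / 10))).card : ℝ) := by
          exact_mod_cast Finset.card_biUnion_le
      _ ≤ ∑ start ∈ (range m).filter (fun start => start + L ≤ m),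
            ((2:ℝ) ^ m * (2:ℝ) ^ (-(β * m / 2))) := by
          apply Finset.sum_le_sum
          intro start hstart
          rw [mem_filter] at hstart
          exact window_bound β hβ0 m start hstart.2
      _ ≤ (m:ℝ) * ((2:ℝ) ^ m * (2:ℝ) ^ (-(β * m / 2))) := by
          rw [Finset.sum_const, nsmul_eq_mul]
          apply mul_le_mul_of_nonneg_right ?_ (by positivity)
          calc (((range m).filter (fun start => start + L ≤ m)).card : ℝ)
              ≤ ((range m).card : ℝ) := by
                exact_mod_cast Finset.card_le_card (Finset.filter_subset _ _)
            _ = m := by rw [Finset.card_range]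
  have e : -(β * (m:ℝ) / 2) = -(1/2 * β * m) := by ring
  rw [e] at hbadcard
  have : (((univ : Finset (Fin m → Fin 2)).filter (fun (s : Fin m → Fin 2) => BetaDense β s)).card : ℝ)
      = 2 ^ m - Bad.card := by
    have := hsplit
    have h2 : ((((univ : Finset (Fin m → Fin 2)).filter (fun (s : Fin m → Fin 2) => BetaDense β s)).card : ℝ))
        + (Bad.card : ℝ) = 2 ^ m := by exact_mod_cast this
    linarith
  rw [this]
  nlinarith [hbadcard]

/-- There is an absolute constant `c > 0` such that: for `δ ∈ (0,1/2)`, `β ∈ (0,1)`, and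
`m ≥ 1` with `δm` a positive integer, if `1 - m·2^{-cβm} > 0` then there is a code
`C ⊆ {0,1}^m` consisting only of `β`-dense strings, with
`|C| ≥ (1 - m·2^{-cβm})·2^{(1-2h(δ))m}/(2δm)`, in which every two distinct codewords have
longest common subsequence of length less than `(1-δ)m` (no string of length `⌈(1-δ)m⌉`
is a common subsequence of two distinct codewords). -/
theorem greedy_dense_binary_deletion_codes :
    ∃ c : ℝ, 0 < c ∧
      ∀ δ β : ℝ, 0 < δ → δ < 1 / 2 → 0 < β → β < 1 →
      ∀ m d : ℕ, 0 < m → 0 < d → (d : ℝ) = δ * m →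
      0 < 1 - m * (2 : ℝ) ^ (-(c * β * m)) →
      ∃ C : Finset (Fin m → Fin 2),
        (∀ u ∈ C, BetaDense β u) ∧
        (1 - m * (2 : ℝ) ^ (-(c * β * m))) *
            ((2 : ℝ) ^ ((1 - 2 * binEnt δ) * m) / (2 * δ * m)) ≤ C.card ∧
        ∀ u ∈ C, ∀ v ∈ C, u ≠ v →
          ¬∃ s : Fin (⌈(1 - δ) * m⌉₊) → Fin 2, IsSubseq s u ∧ IsSubseq s v := by
  refine ⟨1/2, by norm_num, ?_⟩
  intro δ β hδ0 hδh hβ0 hβ1 m d hm hd hdm hpos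
  have h1δ : (0:ℝ) < 1 - δ := by linarith
  have hm' : (0:ℝ) < m := by exact_mod_cast hm
  have hdltm : d < m := by
    have : (d:ℝ) < m := by rw [hdm]; nlinarith
    exact_mod_cast this
  have hdlem : d ≤ m := hdltm.le
  have hceil : ⌈(1 - δ) * (m:ℝ)⌉₊ = m - d := by
    have hmd : (1 - δ) * (m:ℝ) = ((m - d : ℕ) : ℝ) := by
      push_cast [Nat.cast_sub hdlem]
      rw [sub_mul, one_mul, ← hdm]
    rw [hmd, Nat.ceil_natCast]
  rw [hceil]
  set R : (Fin m → Fin 2) → (Fin m → Fin 2) → Prop :=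
    fun u v => ∃ s : Fin (m - d) → Fin 2, IsSubseq s u ∧ IsSubseq s v with hR
  have hsym : ∀ u v, R u v → R v u := fun u v ⟨s, h1, h2⟩ => ⟨s, h2, h1⟩
  have hrefl : ∀ v, R v v := by
    intro v
    have hsub : IsSubseq (fun j => v (Fin.castLE (Nat.sub_le m d) j)) v :=
      ⟨Fin.castLE (Nat.sub_le m d), Fin.strictMono_castLE _, fun j => rfl⟩
    exact ⟨_, hsub, hsub⟩
  set Q : ℝ := (δ⁻¹) ^ d * ((1-δ)⁻¹) ^ (m - d) with hQ
  have hQpos : 0 < Q := by positivity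
  set T : ℕ := ∑ i ∈ Finset.range (d+1), m.choose i with hT
  have hTQ : (T:ℝ) ≤ Q := by
    set θ : ℝ := δ / (1-δ) with hθ
    have hθ0 : 0 < θ := by positivity
    have hθ1 : θ ≤ 1 := by rw [hθ, div_le_one h1δ]; linarith
    have hsum := sum_choose_theta m d θ hθ0 hθ1 hdlem
    have h1 : (1:ℝ) + θ = (1-δ)⁻¹ := by rw [hθ]; field_simp; ring
    have hqθ : Q * θ ^ d = (1+θ) ^ m := by
      calc Q * θ ^ d = (δ⁻¹ * θ)^d * ((1-δ)⁻¹) ^ (m-d) := by rw [mul_pow, hQ]; ring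
        _ = ((1-δ)⁻¹)^d * ((1-δ)⁻¹)^(m-d) := by
            congr 2
            rw [hθ]
            field_simp
        _ = ((1-δ)⁻¹)^(d + (m-d)) := (pow_add _ _ _).symm
        _ = ((1-δ)⁻¹)^m := by congr 1; omega
        _ = (1+θ)^m := by rw [h1]
    have hcast : (∑ i ∈ Finset.range (d+1), (m.choose i : ℝ)) = (T:ℝ) := by
      rw [hT]; push_cast; rfl
    rw [hcast, ← hqθ] at hsum
    exact le_of_mul_le_mul_right hsum (pow_pos hθ0 d)
  have hchooseT : m.choose d ≤ T := by
    rw [hT]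
    exact Finset.single_le_sum (f := fun i => m.choose i) (fun i _ => Nat.zero_le _)
      (Finset.self_mem_range_succ d)
  have hchooseQ : ((m.choose d : ℕ):ℝ) ≤ Q := le_trans (by exact_mod_cast hchooseT) hTQ
  have hRel : ∀ u : Fin m → Fin 2,
      (((univ : Finset (Fin m → Fin 2)).filter (R u)).card : ℝ) ≤ Q * Q := by
    intro u
    set S := (univ : Finset (Fin (m-d) → Fin 2)).filter
      (fun s => IsSubseq s u) with hS
    have per_bound : ∀ s : Fin (m-d) → Fin 2,
        ((univ : Finset (Fin m → Fin 2)).filter (fun v => IsSubseq s v)).card ≤ T := by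
      intro s
      have h1 : (univ : Finset (Fin m → Fin 2)).filter (fun v => IsSubseq s v)
          ⊆ (univ : Finset (Fin m → Fin 2)).filter
            (fun v => (List.ofFn s).Sublist (List.ofFn v)) := by
        apply Finset.monotone_filter_right
        intro v _ hv
        exact isSubseq_sublist hv
      calc ((univ : Finset (Fin m → Fin 2)).filter (fun v => IsSubseq s v)).card
          ≤ ((univ : Finset (Fin m → Fin 2)).filter
            (fun v => (List.ofFn s).Sublist (List.ofFn v))).card := Finset.card_le_card h1
        _ = sCount m (List.ofFn s) := by rw [sCount, Fintype.card_subtype]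
        _ ≤ ∑ i ∈ Finset.range (m - (List.ofFn s).length + 1), m.choose i :=
            sCount_le_sum m _ (by rw [List.length_ofFn]; omega)
        _ = T := by rw [hT, List.length_ofFn, show m - (m-d) = d from by omega]
    have hsubset : (univ : Finset (Fin m → Fin 2)).filter (R u) ⊆
        S.biUnion (fun s => (univ : Finset (Fin m → Fin 2)).filter
          (fun v => IsSubseq s v)) := by
      intro v hv
      rw [mem_filter] at hv
      obtain ⟨-, s, h1, h2⟩ := hv
      exact Finset.mem_biUnion.mpr
        ⟨s, mem_filter.mpr ⟨mem_univ _, h1⟩, mem_filter.mpr ⟨mem_univ _, h2⟩⟩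
    have hnat : ((univ : Finset (Fin m → Fin 2)).filter (R u)).card
        ≤ m.choose (m-d) * T := by
      calc ((univ : Finset (Fin m → Fin 2)).filter (R u)).card
          ≤ (S.biUnion (fun s => (univ : Finset (Fin m → Fin 2)).filter
            (fun v => IsSubseq s v))).card := Finset.card_le_card hsubset
        _ ≤ ∑ s ∈ S, ((univ : Finset (Fin m → Fin 2)).filter
            (fun v => IsSubseq s v)).card := Finset.card_biUnion_le
        _ ≤ ∑ _s ∈ S, T := Finset.sum_le_sum (fun s _ => per_bound s)
        _ = S.card * T := by rw [Finset.sum_const, smul_eq_mul]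
        _ ≤ m.choose (m-d) * T := Nat.mul_le_mul_right _ (subseq_count (m-d) u)
    calc (((univ : Finset (Fin m → Fin 2)).filter (R u)).card : ℝ)
        ≤ ((m.choose (m-d) * T : ℕ) : ℝ) := by exact_mod_cast hnat
      _ = ((m.choose d : ℕ) : ℝ) * (T : ℝ) := by rw [Nat.choose_symm hdlem]; push_cast; ring
      _ ≤ Q * Q := mul_le_mul hchooseQ hTQ (by positivity) hQpos.le
  set D := (univ : Finset (Fin m → Fin 2)).filter
    (fun (s : Fin m → Fin 2) => BetaDense β s) with hD
  set B : ℝ := 2 * δ * m * (Q * Q) with hB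
  have h2δm : (2:ℝ) ≤ 2 * δ * m := by
    have he : (2:ℝ) * d = 2 * δ * m := by rw [hdm]; ring
    have hd1 : (1:ℝ) ≤ d := by exact_mod_cast hd
    nlinarith
  have hBQ : Q * Q ≤ B := by nlinarith [mul_pos hQpos hQpos]
  have hBpos : 0 < B := by
    rw [hB]
    have : (0:ℝ) < 2 * δ * m := by positivity
    positivity
  obtain ⟨C, hCsub, hCcard, hCpair⟩ := greedy_lemma R hsym hrefl B
    (fun u => (hRel u).trans hBQ) D.card D le_rfl
  refine ⟨C, ?_, ?_, ?_⟩
  · intro u hu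
    exact (mem_filter.mp (hCsub hu)).2
  · have hdense := dense_count β hβ0 m hm
    have hmd : ((m - d : ℕ) : ℝ) = (1 - δ) * m := by
      push_cast [Nat.cast_sub hdlem]
      rw [sub_mul, one_mul, ← hdm]
    have hQrpow : (2:ℝ) ^ (binEnt δ * m) = Q := by
      have e1 : binEnt δ * m = (d:ℝ) * Real.logb 2 δ⁻¹
          + ((m - d : ℕ):ℝ) * Real.logb 2 (1-δ)⁻¹ := by
        rw [binEnt, hmd, one_div, one_div, hdm]; ring
      rw [e1, Real.rpow_add two_pos, hQ]
      congr 1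
      · rw [mul_comm, Real.rpow_mul (by norm_num), Real.rpow_logb two_pos (by norm_num)
          (by positivity), Real.rpow_natCast]
      · rw [mul_comm, Real.rpow_mul (by norm_num), Real.rpow_logb two_pos (by norm_num)
          (by positivity), Real.rpow_natCast]
    have hkey : (2:ℝ) ^ ((1 - 2 * binEnt δ) * m) * Q^2 = 2 ^ (m:ℕ) := by
      have e2 : (1 - 2 * binEnt δ) * (m:ℝ) = (m:ℝ) - binEnt δ * m - binEnt δ * m := by ring
      rw [e2, Real.rpow_sub two_pos, Real.rpow_sub two_pos, hQrpow]
      rw [show ((2:ℝ) ^ ((m:ℝ))) = 2 ^ (m:ℕ) from Real.rpow_natCast 2 m]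
      field_simp
    have h2 : (2:ℝ) ^ ((1 - 2 * binEnt δ) * (m:ℝ)) = 2 ^ (m:ℕ) / Q^2 := by
      rw [eq_div_iff (by positivity)]
      exact hkey
    calc (1 - ↑m * (2:ℝ) ^ (-(1/2 * β * ↑m))) *
          ((2:ℝ) ^ ((1 - 2 * binEnt δ) * ↑m) / (2 * δ * ↑m))
        = ((1 - ↑m * (2:ℝ) ^ (-(1/2 * β * ↑m))) * 2 ^ (m:ℕ)) / B := by
          have e3 : (2:ℝ)^(m:ℕ) / Q^2 / (2*δ*(m:ℝ)) = 2^(m:ℕ) / B := by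
            rw [hB, div_div]
            congr 1
            ring
          rw [h2, e3, mul_div_assoc]
      _ ≤ (D.card : ℝ) / B := by
          have := mul_le_mul_of_nonneg_right hdense (inv_nonneg.mpr hBpos.le)
          simpa [div_eq_mul_inv] using this
      _ ≤ C.card := hCcard
  · intro u hu v hv huv
    simpa [hR] using hCpair u hu v hv huv
end

section
/- Let ε ∈ (0,1/2), let θ ∈ (0,1/3], and let k be an integer with k ≥ 64/ε^{2/(1−θ)}. Then for every positive integer m there exists a code C ⊆ [k]^m with |C| ≥ k^{ε·θ·m} such that every two distinct codewords of C have longest common subsequence of length less than εm; equivalently, C can be corrected from a 1−ε fraction of worst-case deletions. (Corollary 2.7 of the paper.) -/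
open Finset in
lemma isSubseq_spec {α : Type*} {ℓ m : ℕ} {s : Fin ℓ → α} {t : Fin m → α}
    (h : IsSubseq s t) :
    ∃ A : Finset (Fin m), A.card = ℓ ∧
      ∀ (hA : A.card = ℓ) (j : Fin ℓ), t (A.orderEmbOfFin hA j) = s j := by
  obtain ⟨f, hf, hfs⟩ := h
  have hA : (Finset.univ.image f).card = ℓ := by
    rw [Finset.card_image_of_injective _ hf.injective, Finset.card_univ, Fintype.card_fin]
  refine ⟨Finset.univ.image f, hA, fun hA' j => ?_⟩
  have hfeq : f = (Finset.univ.image f).orderEmbOfFin hA' :=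
    Finset.orderEmbOfFin_unique hA' (fun x => Finset.mem_image_of_mem f (Finset.mem_univ x)) hf
  rw [← hfeq]; exact hfs j

open scoped Classical in
lemma card_supseq_le_s8 (k ℓ m : ℕ) (hk : 0 < k) (s : Fin ℓ → Fin k) :
    ((Finset.univ : Finset (Fin m → Fin k)).filter fun t => IsSubseq s t).card
      ≤ m.choose ℓ * k ^ (m - ℓ) := by
  classical
  have hcompl : ∀ A : Finset (Fin m), A.card = ℓ → Aᶜ.card = m - ℓ := by
    intro A hA
    rw [Finset.card_compl, hA, Fintype.card_fin]
  choose! A hA hspec using fun (t : Fin m → Fin k) (ht : IsSubseq s t) => isSubseq_spec ht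
  set S : Finset (Finset (Fin m) × (Fin (m - ℓ) → Fin k)) :=
    (Finset.powersetCard ℓ (Finset.univ : Finset (Fin m))) ×ˢ Finset.univ with hS
  have hScard : S.card = m.choose ℓ * k ^ (m - ℓ) := by
    rw [hS, Finset.card_product, Finset.card_powersetCard, Finset.card_univ, Finset.card_univ,
      Fintype.card_fin, Fintype.card_fun, Fintype.card_fin, Fintype.card_fin]
  rw [← hScard]
  set φ : (Fin m → Fin k) → Finset (Fin m) × (Fin (m - ℓ) → Fin k) := fun t =>
    if h : ((A t)ᶜ).card = m - ℓ then (A t, fun j => t ((A t)ᶜ.orderEmbOfFin h j))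
    else (∅, fun _ => ⟨0, hk⟩) with hφ
  apply Finset.card_le_card_of_injOn φ
  · intro t ht
    rw [Finset.coe_filter, Set.mem_setOf_eq] at ht
    have h1 := hA t ht.2
    have h2 := hcompl _ h1
    rw [hφ]
    simp only [dif_pos h2, hS, Finset.mem_coe, Finset.mem_product, Finset.mem_powersetCard_univ, Finset.mem_univ,
      and_true]
    exact h1
  · intro t ht t' ht' heq
    rw [Finset.coe_filter, Set.mem_setOf_eq] at ht ht'
    have h1 := hA t ht.2
    have h1' := hA t' ht'.2
    have h2 := hcompl _ h1
    have h2' := hcompl _ h1'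
    rw [hφ] at heq
    simp only [dif_pos h2, dif_pos h2'] at heq
    have hAeq : A t = A t' := congrArg Prod.fst heq
    have hgeq : (fun j => t ((A t)ᶜ.orderEmbOfFin h2 j))
        = fun j => t' ((A t')ᶜ.orderEmbOfFin h2' j) := congrArg Prod.snd heq
    have hembA : ((A t).orderEmbOfFin h1 : Fin ℓ ↪o Fin m) = (A t').orderEmbOfFin h1' :=
      Finset.orderEmbOfFin_unique' h1' (fun i => hAeq ▸ Finset.orderEmbOfFin_mem (A t) h1 i)
    have hcAeq : (A t)ᶜ = (A t')ᶜ := by rw [hAeq]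
    have hembC : ((A t)ᶜ.orderEmbOfFin h2 : Fin (m - ℓ) ↪o Fin m) = (A t')ᶜ.orderEmbOfFin h2' :=
      Finset.orderEmbOfFin_unique' h2' (fun i => hcAeq ▸ Finset.orderEmbOfFin_mem ((A t)ᶜ) h2 i)
    funext x
    by_cases hx : x ∈ A t
    · have hxr : x ∈ Set.range ⇑((A t).orderEmbOfFin h1) := by
        rw [Finset.range_orderEmbOfFin]; exact Finset.mem_coe.mpr hx
      obtain ⟨j, hj⟩ := hxr
      calc t x = t ((A t).orderEmbOfFin h1 j) := by rw [hj]
        _ = s j := hspec t ht.2 h1 j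
        _ = t' ((A t').orderEmbOfFin h1' j) := (hspec t' ht'.2 h1' j).symm
        _ = t' x := by rw [← hembA]; exact congrArg t' hj
    · have hx' : x ∈ (A t)ᶜ := Finset.mem_compl.mpr hx
      have hxr : x ∈ Set.range ⇑((A t)ᶜ.orderEmbOfFin h2) := by
        rw [Finset.range_orderEmbOfFin]; exact Finset.mem_coe.mpr hx'
      obtain ⟨j, hj⟩ := hxr
      calc t x = t ((A t)ᶜ.orderEmbOfFin h2 j) := by rw [hj]
        _ = t' ((A t')ᶜ.orderEmbOfFin h2' j) := congrFun hgeq j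
        _ = t' x := by rw [← hembC]; exact congrArg t' hj

open scoped Classical in
lemma card_bad_le (k ℓ m : ℕ) (hk : 0 < k) (u : Fin m → Fin k) :
    ((Finset.univ : Finset (Fin m → Fin k)).filter
      fun t => ∃ s : Fin ℓ → Fin k, IsSubseq s u ∧ IsSubseq s t).card
      ≤ m.choose ℓ * (m.choose ℓ * k ^ (m - ℓ)) := by
  classical
  set P := Finset.powersetCard ℓ (Finset.univ : Finset (Fin m)) with hP
  have hsub : ((Finset.univ : Finset (Fin m → Fin k)).filter
      fun t => ∃ s : Fin ℓ → Fin k, IsSubseq s u ∧ IsSubseq s t)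
      ⊆ P.attach.biUnion (fun A =>
        (Finset.univ : Finset (Fin m → Fin k)).filter fun t =>
          IsSubseq (fun j => u (A.1.orderEmbOfFin
            ((Finset.mem_powersetCard_univ.mp A.2)) j)) t) := by
    intro t ht
    rw [Finset.mem_filter] at ht
    obtain ⟨s, hsu, hst⟩ := ht.2
    obtain ⟨A, hAcard, hAspec⟩ := isSubseq_spec hsu
    have hAP : A ∈ P := Finset.mem_powersetCard_univ.mpr hAcard
    rw [Finset.mem_biUnion]
    refine ⟨⟨A, hAP⟩, Finset.mem_attach _ _, ?_⟩
    rw [Finset.mem_filter]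
    refine ⟨Finset.mem_univ _, ?_⟩
    have : s = fun j => u (A.orderEmbOfFin (Finset.mem_powersetCard_univ.mp hAP) j) := by
      funext j
      exact (hAspec _ j).symm
    rwa [← this]
  calc ((Finset.univ : Finset (Fin m → Fin k)).filter
      fun t => ∃ s : Fin ℓ → Fin k, IsSubseq s u ∧ IsSubseq s t).card
      ≤ _ := Finset.card_le_card hsub
    _ ≤ ∑ A ∈ P.attach, ((Finset.univ : Finset (Fin m → Fin k)).filter fun t =>
          IsSubseq (fun j => u (A.1.orderEmbOfFin
            ((Finset.mem_powersetCard_univ.mp A.2)) j)) t).card :=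
        Finset.card_biUnion_le
    _ ≤ ∑ _A ∈ P.attach, m.choose ℓ * k ^ (m - ℓ) := by
        apply Finset.sum_le_sum
        intro A _
        exact card_supseq_le_s8 k ℓ m hk _
    _ = m.choose ℓ * (m.choose ℓ * k ^ (m - ℓ)) := by
        rw [Finset.sum_const, Finset.card_attach, hP, Finset.card_powersetCard,
          Finset.card_univ, Fintype.card_fin, smul_eq_mul]

open scoped Classical in
lemma greedy (k ℓ m : ℕ) (hℓm : ℓ ≤ m) (hk : 0 < k) :
    ∀ c : ℕ, c * (m.choose ℓ * (m.choose ℓ * k ^ (m - ℓ))) ≤ k ^ m →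
    ∃ C : Finset (Fin m → Fin k), C.card = c ∧
      ∀ u ∈ C, ∀ v ∈ C, u ≠ v → ¬∃ s : Fin ℓ → Fin k, IsSubseq s u ∧ IsSubseq s v := by
  classical
  set B := m.choose ℓ * (m.choose ℓ * k ^ (m - ℓ)) with hBdef
  have hself : ∀ u : Fin m → Fin k, ∃ s : Fin ℓ → Fin k, IsSubseq s u ∧ IsSubseq s u := by
    intro u
    exact ⟨fun j => u (Fin.castLE hℓm j),
      ⟨Fin.castLE hℓm, Fin.strictMono_castLE hℓm, fun j => rfl⟩,
      ⟨Fin.castLE hℓm, Fin.strictMono_castLE hℓm, fun j => rfl⟩⟩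
  have hBpos : 0 < B := by
    set u0 : Fin m → Fin k := fun _ => ⟨0, hk⟩ with hu0
    have hu : u0 ∈ (Finset.univ : Finset (Fin m → Fin k)).filter
          (fun t => ∃ s : Fin ℓ → Fin k, IsSubseq s u0 ∧ IsSubseq s t) := by
      rw [Finset.mem_filter]
      exact ⟨Finset.mem_univ _, hself _⟩
    calc 0 < _ := Finset.card_pos.mpr ⟨_, hu⟩
      _ ≤ B := card_bad_le k ℓ m hk _
  intro c
  induction c with
  | zero => exact fun _ => ⟨∅, by simp⟩
  | succ c ih =>
    intro hc
    obtain ⟨C, hcard, hgood⟩ := ih (le_trans (Nat.mul_le_mul_right _ (Nat.le_succ c)) hc)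
    set Bad := C.biUnion (fun u => (Finset.univ : Finset (Fin m → Fin k)).filter
      fun t => ∃ s : Fin ℓ → Fin k, IsSubseq s u ∧ IsSubseq s t) with hBad
    have hBadcard : Bad.card < k ^ m := by
      calc Bad.card ≤ ∑ u ∈ C, ((Finset.univ : Finset (Fin m → Fin k)).filter
            fun t => ∃ s : Fin ℓ → Fin k, IsSubseq s u ∧ IsSubseq s t).card :=
            Finset.card_biUnion_le
        _ ≤ ∑ _u ∈ C, B := Finset.sum_le_sum (fun u _ => card_bad_le k ℓ m hk u)
        _ = c * B := by rw [Finset.sum_const, hcard, smul_eq_mul]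
        _ < (c + 1) * B := by
            have := Nat.add_lt_add_left hBpos (c * B)
            simpa [Nat.succ_mul] using this
        _ ≤ k ^ m := hc
    obtain ⟨t, ht⟩ : ∃ t : Fin m → Fin k, t ∉ Bad := by
      by_contra h
      push_neg at h
      have : (Finset.univ : Finset (Fin m → Fin k)) ⊆ Bad := fun t _ => h t
      have hle := Finset.card_le_card this
      rw [Finset.card_univ, Fintype.card_fun, Fintype.card_fin, Fintype.card_fin] at hle
      omega
    have htC : t ∉ C := by
      intro htC
      exact ht (Finset.mem_biUnion.mpr ⟨t, htC, Finset.mem_filter.mpr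
        ⟨Finset.mem_univ _, hself t⟩⟩)
    have htgood : ∀ u ∈ C, ¬∃ s : Fin ℓ → Fin k, IsSubseq s u ∧ IsSubseq s t := by
      intro u hu hex
      exact ht (Finset.mem_biUnion.mpr ⟨u, hu, Finset.mem_filter.mpr ⟨Finset.mem_univ _, hex⟩⟩)
    refine ⟨insert t C, ?_, ?_⟩
    · rw [Finset.card_insert_of_notMem htC, hcard]
    · intro u hu v hv huv
      rcases Finset.mem_insert.mp hu with rfl | hu' <;>
        rcases Finset.mem_insert.mp hv with rfl | hv'
      · exact absurd rfl huv
      · intro ⟨s, hsu, hsv⟩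
        exact htgood v hv' ⟨s, hsv, hsu⟩
      · exact htgood u hu'
      · exact hgood u hu' v hv' huv

set_option maxHeartbeats 1000000 in
/-- Let `ε ∈ (0,1/2)`, `θ ∈ (0,1/3]`, and `k ≥ 64/ε^{2/(1-θ)}`. Then for every `m ≥ 1`
there exists a code `C ⊆ [k]^m` with `|C| ≥ k^{εθm}` such that every two distinct
codewords have longest common subsequence of length less than `εm` (no string of length
`⌈εm⌉` is a common subsequence of two distinct codewords); equivalently, `C` can be
corrected from a `1-ε` fraction of worst-case deletions. -/
theorem high_deletion_greedy_codes (ε θ : ℝ) (hε0 : 0 < ε) (hε1 : ε < 1 / 2)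
    (hθ0 : 0 < θ) (hθ1 : θ ≤ 1 / 3)
    (k : ℕ) (hk : 64 / ε ^ (2 / (1 - θ)) ≤ (k : ℝ)) (m : ℕ) (hm : 0 < m) :
    ∃ C : Finset (Fin m → Fin k),
      (k : ℝ) ^ (ε * θ * m) ≤ C.card ∧
      ∀ u ∈ C, ∀ v ∈ C, u ≠ v →
        ¬∃ s : Fin (⌈ε * m⌉₊) → Fin k, IsSubseq s u ∧ IsSubseq s v := by
  classical
  have h1θ : 0 < 1 - θ := by linarith
  have hεle1 : ε ^ ((2 : ℝ) / (1 - θ)) ≤ 1 :=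
    Real.rpow_le_one hε0.le (by linarith) (by positivity)
  have hεpow_pos : 0 < ε ^ ((2 : ℝ) / (1 - θ)) := Real.rpow_pos_of_pos hε0 _
  have hk64 : (64 : ℝ) ≤ k := by
    refine le_trans ?_ hk
    rw [le_div_iff₀ hεpow_pos]
    nlinarith
  have hk0 : 0 < k := by
    rcases Nat.eq_zero_or_pos k with rfl | h
    · norm_num at hk64
    · exact h
  have hk1 : (1 : ℝ) ≤ k := by linarith
  have hkpos : (0 : ℝ) < k := by linarith
  set ℓ : ℕ := ⌈ε * m⌉₊ with hℓdef
  have hmR : (0 : ℝ) < m := Nat.cast_pos.mpr hm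
  have hεm0 : 0 < ε * (m : ℝ) := mul_pos hε0 hmR
  have hℓ1 : 1 ≤ ℓ := Nat.ceil_pos.mpr hεm0
  have hℓm : ℓ ≤ m := Nat.ceil_le.mpr (by nlinarith)
  have hεmℓ : ε * m ≤ (ℓ : ℝ) := Nat.le_ceil _
  have hℓpos : (0 : ℝ) < ℓ := by exact_mod_cast hℓ1
  -- step 1 : 16/ε² ≤ k^(1-θ)
  have hK : 16 / ε ^ 2 ≤ (k : ℝ) ^ (1 - θ) := by
    have hbase : (0 : ℝ) ≤ 64 / ε ^ ((2 : ℝ) / (1 - θ)) := by positivity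
    have h := Real.rpow_le_rpow hbase hk h1θ.le
    rw [Real.div_rpow (by norm_num) hεpow_pos.le, ← Real.rpow_mul hε0.le,
      show (2 : ℝ) / (1 - θ) * (1 - θ) = ((2 : ℕ) : ℝ) by push_cast; field_simp,
      Real.rpow_natCast] at h
    have h64 : (16 : ℝ) ≤ 64 ^ (1 - θ) := by
      have h43 : (64 : ℝ) = 4 ^ (3 : ℝ) := by
        rw [show (3 : ℝ) = ((3 : ℕ) : ℝ) by norm_num, Real.rpow_natCast]; norm_num
      have h23 : (64 : ℝ) ^ ((2 : ℝ) / 3) = 16 := by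
        rw [h43, ← Real.rpow_mul (by norm_num),
          show (3 : ℝ) * ((2 : ℝ) / 3) = ((2 : ℕ) : ℝ) by push_cast; ring,
          Real.rpow_natCast]
        norm_num
      rw [← h23]
      exact Real.rpow_le_rpow_of_exponent_le (by norm_num) (by linarith)
    calc (16 : ℝ) / ε ^ 2 ≤ 64 ^ (1 - θ) / ε ^ 2 := by gcongr
      _ ≤ (k : ℝ) ^ (1 - θ) := h
  -- step 2 : binomial bound
  have hfl : ((ℓ : ℝ)) ^ ℓ / (Nat.factorial ℓ : ℝ) ≤ Real.exp ℓ := by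
    refine le_trans ?_ (Real.sum_le_exp_of_nonneg (by positivity) (ℓ + 1))
    exact Finset.single_le_sum (f := fun i => (ℓ : ℝ) ^ i / (Nat.factorial i : ℝ))
      (fun i _ => by positivity) (Finset.self_mem_range_succ ℓ)
  have hfact : ((ℓ : ℝ)) ^ ℓ ≤ Real.exp 1 ^ ℓ * (Nat.factorial ℓ : ℝ) := by
    rw [Real.exp_one_pow]
    exact (div_le_iff₀ (by positivity)).mp hfl
  have hchoose : (m.choose ℓ : ℝ) ≤ (Real.exp 1 / ε) ^ ℓ := by
    have h1 : (m.choose ℓ : ℝ) ≤ (m : ℝ) ^ ℓ / (Nat.factorial ℓ : ℝ) :=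
      Nat.choose_le_pow_div ℓ m
    have hm_le : (m : ℝ) ≤ (ℓ : ℝ) / ε := by
      rw [le_div_iff₀ hε0]; nlinarith
    have h2 : (m : ℝ) ^ ℓ ≤ ((ℓ : ℝ) / ε) ^ ℓ := pow_le_pow_left₀ (by positivity) hm_le ℓ
    calc (m.choose ℓ : ℝ) ≤ (m : ℝ) ^ ℓ / (Nat.factorial ℓ : ℝ) := h1
      _ ≤ ((ℓ : ℝ) / ε) ^ ℓ / (Nat.factorial ℓ : ℝ) := by gcongr
      _ = (ℓ : ℝ) ^ ℓ / (ε ^ ℓ * (Nat.factorial ℓ : ℝ)) := by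
          rw [div_pow]; field_simp
      _ ≤ (Real.exp 1 ^ ℓ * (Nat.factorial ℓ : ℝ)) / (ε ^ ℓ * (Nat.factorial ℓ : ℝ)) := by
          gcongr
      _ = (Real.exp 1 / ε) ^ ℓ := by
          rw [div_pow]
          field_simp
  -- step 3 : key inequality
  set X : ℝ := (k : ℝ) ^ (ε * θ * (m : ℝ)) with hX
  have hX1 : (1 : ℝ) ≤ X := by
    rw [hX, show (1 : ℝ) = (k : ℝ) ^ (0 : ℝ) by rw [Real.rpow_zero]]
    exact Real.rpow_le_rpow_of_exponent_le hk1 (by positivity)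
  have he2 : (2 : ℝ) ≤ 16 / Real.exp 1 ^ 2 := by
    have h := Real.exp_one_lt_d9
    rw [le_div_iff₀ (by positivity)]
    nlinarith [Real.exp_pos 1]
  have hsplit : ((k : ℝ)) ^ ℓ = (k : ℝ) ^ (θ * ℓ) * (k : ℝ) ^ ((1 - θ) * ℓ) := by
    rw [← Real.rpow_natCast (k : ℝ) ℓ, ← Real.rpow_add hkpos]
    congr 1
    ring
  have hpart1 : X ≤ (k : ℝ) ^ (θ * (ℓ : ℝ)) :=
    Real.rpow_le_rpow_of_exponent_le hk1 (by nlinarith)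
  have hpart2 : ((16 / ε ^ 2 : ℝ)) ^ ℓ ≤ (k : ℝ) ^ ((1 - θ) * (ℓ : ℝ)) := by
    rw [Real.rpow_mul hkpos.le, Real.rpow_natCast]
    exact pow_le_pow_left₀ (by positivity) hK ℓ
  have hprod : 2 * ((Real.exp 1 / ε) ^ ℓ) ^ 2 ≤ ((16 / ε ^ 2 : ℝ)) ^ ℓ := by
    have heq : ((16 : ℝ) / ε ^ 2) ^ ℓ
        = (16 / Real.exp 1 ^ 2) ^ ℓ * ((Real.exp 1 / ε) ^ 2) ^ ℓ := by
      rw [← mul_pow]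
      congr 1
      field_simp
    have h2ℓ : (2 : ℝ) ≤ (16 / Real.exp 1 ^ 2) ^ ℓ := by
      calc (2 : ℝ) = 2 ^ 1 := (pow_one 2).symm
        _ ≤ 2 ^ ℓ := pow_le_pow_right₀ (by norm_num) hℓ1
        _ ≤ (16 / Real.exp 1 ^ 2) ^ ℓ := pow_le_pow_left₀ (by norm_num) he2 ℓ
    calc 2 * ((Real.exp 1 / ε) ^ ℓ) ^ 2 = 2 * ((Real.exp 1 / ε) ^ 2) ^ ℓ := by
          rw [← pow_mul, ← pow_mul, mul_comm ℓ 2]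
      _ ≤ (16 / Real.exp 1 ^ 2) ^ ℓ * ((Real.exp 1 / ε) ^ 2) ^ ℓ := by
          apply mul_le_mul_of_nonneg_right h2ℓ (by positivity)
      _ = ((16 : ℝ) / ε ^ 2) ^ ℓ := heq.symm
  have hkey : 2 * X * ((Real.exp 1 / ε) ^ ℓ) ^ 2 ≤ ((k : ℝ)) ^ ℓ := by
    calc 2 * X * ((Real.exp 1 / ε) ^ ℓ) ^ 2
        = X * (2 * ((Real.exp 1 / ε) ^ ℓ) ^ 2) := by ring
      _ ≤ (k : ℝ) ^ (θ * (ℓ : ℝ)) * ((16 / ε ^ 2 : ℝ)) ^ ℓ := by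
          apply mul_le_mul hpart1 hprod (by positivity) (by positivity)
      _ ≤ (k : ℝ) ^ (θ * (ℓ : ℝ)) * (k : ℝ) ^ ((1 - θ) * (ℓ : ℝ)) := by
          apply mul_le_mul_of_nonneg_left hpart2 (by positivity)
      _ = ((k : ℝ)) ^ ℓ := hsplit.symm
  -- step 4 : the cardinality bound for greedy
  set c : ℕ := ⌈X⌉₊ with hc
  have hcle : (c : ℝ) ≤ 2 * X := by
    have := Nat.ceil_lt_add_one (le_trans zero_le_one hX1)
    linarith
  have hmain : (c : ℝ) * ((m.choose ℓ : ℝ) * ((m.choose ℓ : ℝ) * (k : ℝ) ^ (m - ℓ)))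
      ≤ (k : ℝ) ^ m := by
    have hnn : (0 : ℝ) ≤ (k : ℝ) ^ (m - ℓ) := by positivity
    calc (c : ℝ) * ((m.choose ℓ : ℝ) * ((m.choose ℓ : ℝ) * (k : ℝ) ^ (m - ℓ)))
        = ((c : ℝ) * ((m.choose ℓ : ℝ) * (m.choose ℓ : ℝ))) * (k : ℝ) ^ (m - ℓ) := by ring
      _ ≤ ((2 * X) * (((Real.exp 1 / ε) ^ ℓ) ^ 2)) * (k : ℝ) ^ (m - ℓ) := by
          apply mul_le_mul_of_nonneg_right _ hnn
          have hcast : (0 : ℝ) ≤ (m.choose ℓ : ℝ) := by positivity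
          have hsq : (m.choose ℓ : ℝ) * (m.choose ℓ : ℝ) ≤ ((Real.exp 1 / ε) ^ ℓ) ^ 2 := by
            rw [sq]
            exact mul_le_mul hchoose hchoose hcast (by positivity)
          exact mul_le_mul hcle hsq (by positivity) (by positivity)
      _ = (2 * X * (((Real.exp 1 / ε) ^ ℓ) ^ 2)) * (k : ℝ) ^ (m - ℓ) := by ring
      _ ≤ ((k : ℝ)) ^ ℓ * (k : ℝ) ^ (m - ℓ) := mul_le_mul_of_nonneg_right hkey hnn
      _ = (k : ℝ) ^ m := by
          rw [← pow_add]
          congr 1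
          omega
  have hnat : c * (m.choose ℓ * (m.choose ℓ * k ^ (m - ℓ))) ≤ k ^ m := by
    rw [← Nat.cast_le (α := ℝ)]
    push_cast
    exact hmain
  obtain ⟨C, hCcard, hCgood⟩ := greedy k ℓ m hℓm hk0 c hnat
  refine ⟨C, ?_, hCgood⟩
  rw [hCcard]
  exact Nat.le_ceil _
end

section
/- Let k ≥ 2 and let ℓ, m be positive integers with ℓ ≤ m, and fix a string s ∈ [k]^ℓ. The number of strings s' ∈ [k]^m that contain s as a subsequence is at most Σ_{t=ℓ}^{m} C(t−1, ℓ−1)·k^{m−t}·(k−1)^{t−ℓ}, and this sum is at most k^{m−ℓ}·C(m, ℓ), where C(a,b) denotes the binomial coefficient. (Lemma 2.3 of the paper, general alphabet bound.) -/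
section Aux

variable {α : Type*} {ℓ m : ℕ}

lemma IsSubseq.tail {s : Fin (ℓ + 1) → α} {u : Fin m → α}
    (h : IsSubseq s u) : IsSubseq (s ∘ Fin.succ) u := by
  obtain ⟨f, hf, hv⟩ := h
  exact ⟨f ∘ Fin.succ, hf.comp Fin.strictMono_succ, fun j => hv j.succ⟩

lemma IsSubseq.cons {s : Fin ℓ → α} {u : Fin m → α} (a : α)
    (h : IsSubseq s u) : IsSubseq s (Fin.cons a u) := by
  obtain ⟨f, hf, hv⟩ := h
  exact ⟨fun j => (f j).succ, fun i j hij => Fin.succ_lt_succ_iff.2 (hf hij),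
    fun j => by simpa [Fin.cons_succ] using hv j⟩

lemma isSubseq_cons_iff (s : Fin (ℓ + 1) → α) (a : α) (u : Fin m → α) [Decidable (a = s 0)] :
    IsSubseq s (Fin.cons a u) ↔
      if a = s 0 then IsSubseq (s ∘ Fin.succ) u else IsSubseq s u := by
  constructor
  · rintro ⟨f, hf, hv⟩
    by_cases h0 : f 0 = 0
    · have ha : a = s 0 := by rw [← hv 0, h0, Fin.cons_zero]
      rw [if_pos ha]
      have hne : ∀ j : Fin ℓ, f j.succ ≠ 0 := by
        intro j
        have h1 : f 0 < f j.succ := hf (Fin.succ_pos j)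
        rw [h0] at h1
        exact Fin.pos_iff_ne_zero.1 h1
      refine ⟨fun j => (f j.succ).pred (hne j),
        fun i j hij => Fin.pred_lt_pred_iff.2 (hf (Fin.succ_lt_succ_iff.2 hij)), fun j => ?_⟩
      have := hv j.succ
      rwa [← Fin.succ_pred (f j.succ) (hne j), Fin.cons_succ] at this
    · have hne : ∀ j, f j ≠ 0 := by
        intro j
        by_cases hj : j = 0
        · rwa [hj]
        · have h1 : f 0 < f j := hf (Fin.pos_of_ne_zero hj)
          exact Fin.pos_iff_ne_zero.1 (lt_of_le_of_lt (Fin.zero_le _) h1)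
      have hsub : IsSubseq s u := by
        refine ⟨fun j => (f j).pred (hne j),
          fun i j hij => Fin.pred_lt_pred_iff.2 (hf hij), fun j => ?_⟩
        have := hv j
        rwa [← Fin.succ_pred (f j) (hne j), Fin.cons_succ] at this
      split_ifs with h
      · exact hsub.tail
      · exact hsub
  · split_ifs with h
    · rintro ⟨g, hg, hv⟩
      refine ⟨Fin.cases 0 (fun j => (g j).succ), ?_, ?_⟩
      · intro i j hij
        induction j using Fin.cases with
        | zero => exact absurd hij (by simp)
        | succ j' =>
          induction i using Fin.cases with
          | zero => simpa using Fin.succ_pos (g j')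
          | succ i' =>
            simpa using Fin.succ_lt_succ_iff.2 (hg (Fin.succ_lt_succ_iff.1 hij))
      · intro j
        induction j using Fin.cases with
        | zero => simpa using h
        | succ j' => simpa [Fin.cons_succ] using hv j'
    · exact fun h' => h'.cons a

lemma isSubseq_self_len_eq {s s' : Fin ℓ → α} (h : IsSubseq s s') : s' = s := by
  obtain ⟨f, hf, hv⟩ := h
  have hsurj : Function.Surjective f :=
    Finite.injective_iff_surjective.1 hf.injective
  have hr : Set.range f = Set.range (id : Fin ℓ → Fin ℓ) := by
    rw [hsurj.range_eq, Set.range_id]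
  haveI : WellFoundedLT (Fin ℓ) := inferInstance
  have hfid : f = id :=
    (hf.range_inj (strictMono_id : StrictMono (id : Fin ℓ → Fin ℓ))).1 hr
  funext j
  have := hv j
  rwa [hfid] at this

end Aux

/-- The sum appearing in the bound. -/
def SB (k ℓ m : ℕ) : ℕ :=
  ∑ t ∈ Finset.Icc ℓ m, (t - 1).choose (ℓ - 1) * k ^ (m - t) * (k - 1) ^ (t - ℓ)

/-- The bound, extended to `ℓ = 0` by `k ^ m`. -/
def TB (k ℓ m : ℕ) : ℕ := if ℓ = 0 then k ^ m else SB k ℓ m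

lemma SB_self (k ℓ : ℕ) : SB k ℓ ℓ = 1 := by
  simp [SB]

lemma SB_peel (k : ℕ) {ℓ m : ℕ} (hlm : ℓ ≤ m) :
    SB k ℓ (m + 1) = k * SB k ℓ m + m.choose (ℓ - 1) * (k - 1) ^ (m + 1 - ℓ) := by
  unfold SB
  rw [Finset.sum_Icc_succ_top (hlm.trans (Nat.le_succ m)), Finset.mul_sum]
  congr 1
  · apply Finset.sum_congr rfl
    intro t ht
    have htm : t ≤ m := (Finset.mem_Icc.1 ht).2
    have : m + 1 - t = (m - t) + 1 := by omega
    rw [this, pow_succ]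
    ring
  · simp

lemma SB_rec (k : ℕ) {ℓ m : ℕ} (hℓ : 1 ≤ ℓ) (hlm : ℓ ≤ m) :
    SB k ℓ (m + 1) = TB k (ℓ - 1) m + (k - 1) * SB k ℓ m := by
  induction m, hlm using Nat.le_induction with
  | base =>
    rw [SB_peel k le_rfl, SB_self]
    obtain ⟨n, rfl⟩ : ∃ n, ℓ = n + 1 := ⟨ℓ - 1, by omega⟩
    rcases Nat.eq_zero_or_pos n with hn | hn
    · subst hn
      simp [TB]
    · obtain ⟨n', rfl⟩ : ∃ n', n = n' + 1 := ⟨n - 1, by omega⟩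
      have : TB k (n' + 1 + 1 - 1) (n' + 1 + 1) = SB k (n' + 1) ((n' + 1) + 1) := by
        simp [TB]
      rw [this, SB_peel k le_rfl, SB_self]
      have h1 : (n' + 1).choose (n' + 1 - 1) = n' + 1 := by
        simpa using Nat.choose_succ_self_right n'
      have h2 : (n' + 1 + 1).choose (n' + 1 + 1 - 1) = n' + 2 := by
        simpa using Nat.choose_succ_self_right (n' + 1)
      rw [h1, h2]
      have h3 : n' + 1 + 1 + 1 - (n' + 1 + 1) = 1 := by omega
      have h4 : n' + 1 + 1 - (n' + 1) = 1 := by omega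
      rw [h3, h4]
      ring
  | succ m hm ih =>
    conv_lhs => rw [SB_peel k (by omega), ih]
    conv_rhs => rw [SB_peel k hm]
    obtain ⟨n, rfl⟩ : ∃ n, ℓ = n + 1 := ⟨ℓ - 1, by omega⟩
    simp only [Nat.add_sub_cancel]
    rcases Nat.eq_zero_or_pos n with hn | hn
    · subst hn
      simp only [TB, Nat.add_sub_cancel, if_pos rfl, Nat.choose_zero_right,
        Nat.reduceAdd, Nat.reduceSub, if_true]
      rw [pow_succ, pow_succ]
      ring
    · obtain ⟨n', rfl⟩ : ∃ n', n = n' + 1 := ⟨n - 1, by omega⟩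
      have hT : ∀ m', TB k (n' + 1) m' = SB k (n' + 1) m' := fun m' => by simp [TB]
      rw [hT, hT, SB_peel k (by omega)]
      have hp : (m + 1).choose (n' + 1) = m.choose (n' + 1) + m.choose n' := by
        rw [Nat.choose_succ_succ']
        ring
      rw [hp]
      simp only [Nat.add_sub_cancel]
      have he1 : m + 1 + 1 - (n' + 1 + 1) = (m + 1 - (n' + 1 + 1)) + 1 := by omega
      have he2 : m + 1 - (n' + 1) = (m + 1 - (n' + 1 + 1)) + 1 := by omega
      rw [he1, he2, pow_succ]
      ring

open scoped Classical in
lemma ncard_rec (k ℓ m : ℕ) (hk : 1 ≤ k) (s : Fin (ℓ + 1) → Fin k) :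
    {s' : Fin (m + 1) → Fin k | IsSubseq s s'}.ncard
      = {u : Fin m → Fin k | IsSubseq (s ∘ Fin.succ) u}.ncard
        + (k - 1) * {u : Fin m → Fin k | IsSubseq s u}.ncard := by
  classical
  rw [← Nat.card_coe_set_eq, ← Nat.card_coe_set_eq, ← Nat.card_coe_set_eq]
  simp only [Set.coe_setOf]
  have e1 : {x : Fin k × (Fin m → Fin k) // IsSubseq s (Fin.cons x.1 x.2)}
      ≃ {s' : Fin (m + 1) → Fin k // IsSubseq s s'} :=
    (Fin.consEquiv fun _ => Fin k).subtypeEquiv (fun x => Iff.rfl)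
  have e2 := Equiv.subtypeProdEquivSigmaSubtype
    (fun (a : Fin k) (u : Fin m → Fin k) => IsSubseq s (Fin.cons a u))
  have hcard : Nat.card {s' : Fin (m + 1) → Fin k // IsSubseq s s'}
      = ∑ a : Fin k, Nat.card {u : Fin m → Fin k // IsSubseq s (Fin.cons a u)} := by
    rw [← Nat.card_congr e1, Nat.card_congr e2, Nat.card_eq_fintype_card,
      Fintype.card_sigma]
    exact Finset.sum_congr rfl fun a _ => (Nat.card_eq_fintype_card).symm
  have hfib : ∀ a : Fin k, Nat.card {u : Fin m → Fin k // IsSubseq s (Fin.cons a u)}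
      = if a = s 0 then Nat.card {u : Fin m → Fin k // IsSubseq (s ∘ Fin.succ) u}
        else Nat.card {u : Fin m → Fin k // IsSubseq s u} := by
    intro a
    by_cases h : a = s 0
    · rw [if_pos h]
      exact Nat.card_congr (Equiv.subtypeEquivRight fun u => by
        rw [isSubseq_cons_iff, if_pos h])
    · rw [if_neg h]
      exact Nat.card_congr (Equiv.subtypeEquivRight fun u => by
        rw [isSubseq_cons_iff, if_neg h])
  rw [hcard, Finset.sum_congr rfl fun a _ => hfib a]
  have hins : (Finset.univ : Finset (Fin k)) =
      insert (s 0) (Finset.univ.erase (s 0)) :=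
    (Finset.insert_erase (Finset.mem_univ _)).symm
  rw [hins, Finset.sum_insert (Finset.notMem_erase _ _), if_pos rfl]
  congr 1
  rw [Finset.sum_congr rfl (fun a ha => if_neg (Finset.ne_of_mem_erase ha)),
    Finset.sum_const, Finset.card_erase_of_mem (Finset.mem_univ _)]
  simp [mul_comm]

lemma ncard_le_TB (k : ℕ) (hk : 2 ≤ k) :
    ∀ m ℓ (s : Fin ℓ → Fin k), ℓ ≤ m →
      {s' : Fin m → Fin k | IsSubseq s s'}.ncard ≤ TB k ℓ m := by
  intro m
  induction m with
  | zero =>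
    intro ℓ s hlm
    interval_cases ℓ
    have h1 : {s' : Fin 0 → Fin k | IsSubseq s s'}.ncard ≤ Nat.card (Fin 0 → Fin k) := by
      rw [← Set.ncard_univ]
      exact Set.ncard_le_ncard (Set.subset_univ _) Set.finite_univ
    simpa [TB, Nat.card_eq_fintype_card] using h1
  | succ m ih =>
    intro ℓ s hlm
    rcases Nat.eq_zero_or_pos ℓ with hℓ | hℓ
    · subst hℓ
      have h1 : {s' : Fin (m + 1) → Fin k | IsSubseq s s'}.ncard
          ≤ Nat.card (Fin (m + 1) → Fin k) := by
        rw [← Set.ncard_univ]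
        exact Set.ncard_le_ncard (Set.subset_univ _) Set.finite_univ
      simpa [TB, Nat.card_eq_fintype_card] using h1
    rcases eq_or_lt_of_le hlm with heq | hlt
    · -- ℓ = m + 1 : only superstring is s itself
      subst heq
      have hsub : {s' : Fin (m + 1) → Fin k | IsSubseq s s'} ⊆ {s} := by
        intro s' hs'
        exact isSubseq_self_len_eq hs'
      have h1 : {s' : Fin (m + 1) → Fin k | IsSubseq s s'}.ncard ≤ ({s} : Set _).ncard :=
        Set.ncard_le_ncard hsub (Set.finite_singleton _)
      rw [Set.ncard_singleton] at h1
      have h2 : TB k (m + 1) (m + 1) = 1 := by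
        simp only [TB, if_neg (by omega : ¬ m + 1 = 0)]
        exact SB_self k (m + 1)
      omega
    · have hlm' : ℓ ≤ m := by omega
      obtain ⟨n, rfl⟩ : ∃ n, ℓ = n + 1 := ⟨ℓ - 1, by omega⟩
      rw [ncard_rec k n m (by omega) s]
      have h1 := ih n (s ∘ Fin.succ) (by omega)
      have h2 := ih (n + 1) s hlm'
      have h3 : TB k (n + 1) (m + 1) = TB k n m + (k - 1) * TB k (n + 1) m := by
        simp only [TB, if_neg (Nat.succ_ne_zero n)]
        have := SB_rec k (ℓ := n + 1) (m := m) (by omega) hlm'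
        simpa [TB] using this
      rw [h3]
      have h4 : (k - 1) * {u : Fin m → Fin k | IsSubseq s u}.ncard
          ≤ (k - 1) * TB k (n + 1) m := Nat.mul_le_mul_left _ h2
      omega

lemma sum_choose_Icc {ℓ m : ℕ} (hℓ : 1 ≤ ℓ) (hm : ℓ ≤ m) :
    ∑ t ∈ Finset.Icc ℓ m, (t - 1).choose (ℓ - 1) = m.choose ℓ := by
  obtain ⟨l, rfl⟩ : ∃ l, ℓ = l + 1 := ⟨ℓ - 1, by omega⟩
  obtain ⟨n, rfl⟩ : ∃ n, m = n + 1 := ⟨m - 1, by omega⟩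
  rw [← Nat.sum_Icc_choose n l]
  rw [show Finset.Icc (l + 1) (n + 1) = (Finset.Icc l n).map (addRightEmbedding 1) from
    (Finset.map_add_right_Icc l n 1).symm, Finset.sum_map]
  apply Finset.sum_congr rfl
  intro i _
  simp [addRightEmbedding]

/-- Let `k ≥ 2`, `1 ≤ ℓ ≤ m`, and fix `s ∈ [k]^ℓ`. The number of strings `s' ∈ [k]^m`
containing `s` as a subsequence is at most
`Σ_{t=ℓ}^{m} C(t-1, ℓ-1) k^{m-t} (k-1)^{t-ℓ}`, and this sum is at most
`k^{m-ℓ} C(m, ℓ)`. -/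
theorem count_superstrings (k ℓ m : ℕ) (hk : 2 ≤ k) (hℓ : 0 < ℓ) (hℓm : ℓ ≤ m)
    (s : Fin ℓ → Fin k) :
    {s' : Fin m → Fin k | IsSubseq s s'}.ncard ≤
        ∑ t ∈ Finset.Icc ℓ m, (t - 1).choose (ℓ - 1) * k ^ (m - t) * (k - 1) ^ (t - ℓ) ∧
      ∑ t ∈ Finset.Icc ℓ m, (t - 1).choose (ℓ - 1) * k ^ (m - t) * (k - 1) ^ (t - ℓ) ≤
        k ^ (m - ℓ) * m.choose ℓ := by
  constructor
  · have h := ncard_le_TB k hk m ℓ s hℓm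
    rwa [TB, if_neg (by omega), SB] at h
  · have h1 : ∑ t ∈ Finset.Icc ℓ m, (t - 1).choose (ℓ - 1) * k ^ (m - t) * (k - 1) ^ (t - ℓ)
        ≤ ∑ t ∈ Finset.Icc ℓ m, (t - 1).choose (ℓ - 1) * k ^ (m - ℓ) := by
      apply Finset.sum_le_sum
      intro t ht
      obtain ⟨h1, h2⟩ := Finset.mem_Icc.1 ht
      have : k ^ (m - t) * (k - 1) ^ (t - ℓ) ≤ k ^ (m - ℓ) := by
        calc k ^ (m - t) * (k - 1) ^ (t - ℓ) ≤ k ^ (m - t) * k ^ (t - ℓ) :=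
              Nat.mul_le_mul_left _ (Nat.pow_le_pow_left (by omega) _)
          _ = k ^ (m - t + (t - ℓ)) := (pow_add k _ _).symm
          _ = k ^ (m - ℓ) := by congr 1; omega
      calc (t - 1).choose (ℓ - 1) * k ^ (m - t) * (k - 1) ^ (t - ℓ)
          = (t - 1).choose (ℓ - 1) * (k ^ (m - t) * (k - 1) ^ (t - ℓ)) := by ring
        _ ≤ (t - 1).choose (ℓ - 1) * k ^ (m - ℓ) := Nat.mul_le_mul_left _ this
    refine h1.trans ?_
    rw [← Finset.sum_mul, sum_choose_Icc hℓ hℓm, mul_comm]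
end
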